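/- arXiv:2005.09798 — 5 statements merged into one kernel-verified Lean document; each statement's English description precedes it below -/
import Mathlib

section
/- For every odd prime p, the wreath product Z_p ≀ Z_p (the semidirect product Z_p ⋉ (Z_p)^p where Z_p acts on (Z_p)^p by cyclically permuting the coordinates) is not GRR-detecting, and consequently it is also not DRR-detecting. -/
/-! Common definitions: Cayley digraphs, digraph automorphism groups,
DRRs/GRRs, detecting groups, the regular representation, the group `W(G,N)`,
wreath and cartesian products of digraphs, and the wreath product of groups. -/

universe u

/-- The adjacency relation of the Cayley digraph `Cay(G,S)`:
there is a directed edge from `g₁` to `g₂` iff `g₂ = s * g₁` for some `s ∈ S`. -/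
def cayAdj {G : Type*} [Group G] (S : Set G) : G → G → Prop :=
  fun g₁ g₂ => ∃ s ∈ S, g₂ = s * g₁

/-- The automorphism group of a digraph (given by its adjacency relation),
as a subgroup of the symmetric group on the vertices. -/
def digraphAut {V : Type*} (Adj : V → V → Prop) : Subgroup (Equiv.Perm V) where
  carrier := {σ | ∀ x y, Adj (σ x) (σ y) ↔ Adj x y}
  one_mem' := fun _ _ => Iff.rfl
  mul_mem' := by
    intro σ τ hσ hτ x y
    simp only [Equiv.Perm.mul_apply]
    exact (hσ _ _).trans (hτ _ _)
  inv_mem' := by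
    intro σ hσ x y
    have h := (hσ (σ⁻¹ x) (σ⁻¹ y)).symm
    simpa using h

/-- A digraph is a DRR (digraphical regular representation) of the group `G` if its
automorphism group is isomorphic to `G` and acts regularly on the vertex set. -/
def IsDRR (G : Type*) [Group G] {V : Type*} (Adj : V → V → Prop) : Prop :=
  Nonempty (digraphAut Adj ≃* G) ∧
    ∀ v w : V, ∃! σ : digraphAut Adj, (σ : Equiv.Perm V) v = w

/-- A GRR (graphical regular representation) of `G` is a DRR that is a graph. -/
def IsGRR (G : Type*) [Group G] {V : Type*} (Adj : V → V → Prop) : Prop :=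
  Symmetric Adj ∧ IsDRR G Adj

/-- `Aut(G,S)` is trivial: the only group automorphism `φ` of `G` with `φ(S) = S`
is the identity. -/
def AutGSTrivial {G : Type*} [Group G] (S : Set G) : Prop :=
  ∀ φ : MulAut G, ⇑φ '' S = S → φ = 1

/-- `G` is DRR-detecting: for every `S ⊆ G`, if `Aut(G,S) = 1` then
`Cay(G,S)` is a DRR of `G`. -/
def DRRDetecting (G : Type*) [Group G] : Prop :=
  ∀ S : Set G, AutGSTrivial S → IsDRR G (cayAdj S)

/-- `G` is GRR-detecting: for every inverse-closed `S ⊆ G`, if `Aut(G,S) = 1` then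
`Cay(G,S)` is a GRR of `G`. -/
def GRRDetecting (G : Type*) [Group G] : Prop :=
  ∀ S : Set G, (∀ s ∈ S, s⁻¹ ∈ S) → AutGSTrivial S → IsGRR G (cayAdj S)

/-- `G` admits a DRR (equivalently, some Cayley digraph of `G` is a DRR). -/
def HasDRR (G : Type*) [Group G] : Prop :=
  ∃ S : Set G, IsDRR G (cayAdj S)

/-- `G` admits a GRR (equivalently, some Cayley graph of `G` is a GRR). -/
def HasGRR (G : Type*) [Group G] : Prop :=
  ∃ S : Set G, (∀ s ∈ S, s⁻¹ ∈ S) ∧ IsGRR G (cayAdj S)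

/-- The right regular representation `Ĝ = {x ↦ x·g : g ∈ G}` of `G`,
as a subgroup of the symmetric group on `G`. -/
def regularRep (G : Type*) [Group G] : Subgroup (Equiv.Perm G) where
  carrier := {σ | ∃ g : G, ∀ x, σ x = x * g}
  one_mem' := ⟨1, fun x => (mul_one x).symm⟩
  mul_mem' := by
    rintro σ τ ⟨g, hg⟩ ⟨h, hh⟩
    exact ⟨h * g, fun x => by
      simp only [Equiv.Perm.mul_apply, hg, hh, mul_assoc]⟩
  inv_mem' := by
    rintro σ ⟨g, hg⟩
    refine ⟨g⁻¹, fun x => ?_⟩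
    have h1 : σ (x * g⁻¹) = x := by rw [hg]; group
    calc σ⁻¹ x = σ⁻¹ (σ (x * g⁻¹)) := by rw [h1]
      _ = x * g⁻¹ := by simp

/-- The set `W(G,N)` of all permutations `φ_{c,f} : x ↦ x·c·f(x̄)` of `G`,
where `c ∈ G` and `f : G/N → N`. -/
def Wset (G : Type*) [Group G] (N : Subgroup G) [N.Normal] : Set (Equiv.Perm G) :=
  {σ | ∃ (c : G) (f : G ⧸ N → G), (∀ q, f q ∈ N) ∧
      ∀ x : G, σ x = x * c * f (QuotientGroup.mk x)}

/-- The wreath product `X ≀ Y` of two digraphs. -/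
def wreathAdj {X Y : Type*} (A : X → X → Prop) (B : Y → Y → Prop) :
    X × Y → X × Y → Prop :=
  fun p q => A p.1 q.1 ∨ (p.1 = q.1 ∧ B p.2 q.2)

/-- The cartesian product `X □ Y` of two digraphs. -/
def cartAdj {X Y : Type*} (A : X → X → Prop) (B : Y → Y → Prop) :
    X × Y → X × Y → Prop :=
  fun p q => (p.1 = q.1 ∧ B p.2 q.2) ∨ (p.2 = q.2 ∧ A p.1 q.1)

/-- A digraph is prime with respect to the cartesian product if it has more than one
vertex and is not isomorphic to a cartesian product of two digraphs,
each with more than one vertex. -/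
def IsPrimeDigraph {V : Type u} (Adj : V → V → Prop) : Prop :=
  (∃ x y : V, x ≠ y) ∧
    ¬ ∃ (X Y : Type u) (A : X → X → Prop) (B : Y → Y → Prop) (e : V ≃ X × Y),
        (∃ x₁ x₂ : X, x₁ ≠ x₂) ∧ (∃ y₁ y₂ : Y, y₁ ≠ y₂) ∧
          ∀ v w : V, Adj v w ↔ cartAdj A B (e v) (e w)

/-- A digraph is weakly connected if any two vertices are joined by a path in the
underlying undirected graph. -/
def WeaklyConnected {V : Type*} (Adj : V → V → Prop) : Prop :=
  ∀ x y : V, Relation.ReflTransGen (fun a b => Adj a b ∨ Adj b a) x y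

/-- Translation of coordinates: the automorphism `v ↦ (x ↦ v (x * q))`
of the group `Q → N`. -/
def transAut {Q N : Type*} [Group Q] [Group N] (q : Q) : (Q → N) ≃* (Q → N) where
  toFun v := fun x => v (x * q)
  invFun v := fun x => v (x * q⁻¹)
  left_inv v := funext fun x => by simp [mul_assoc]
  right_inv v := funext fun x => by simp [mul_assoc]
  map_mul' v w := rfl

/-- The action of `Q` on `Q → N` by translating coordinates, as a homomorphism
`Q →* MulAut (Q → N)`. -/
def transHom (Q N : Type*) [Group Q] [Group N] : Q →* MulAut (Q → N) where
  toFun := transAut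
  map_one' := by
    ext v x
    simp [transAut]
  map_mul' q₁ q₂ := by
    ext v x
    simp [transAut, mul_assoc, MulAut.mul_apply]

/-- The wreath product `Q ≀ N` of two groups: the semidirect product
`N^Q ⋊ Q`, with `Q` acting on `N^Q` by translating the coordinates. -/
abbrev WreathProd (Q N : Type*) [Group Q] [Group N] :=
  SemidirectProduct (Q → N) Q (transHom Q N)

namespace ZpAux
open Multiplicative SemidirectProduct

variable (p : ℕ) [Fact p.Prime]

abbrev MZ := Multiplicative (ZMod p)
abbrev GW := WreathProd (MZ p) (MZ p)

lemma mul_left_apply (a b : GW p) (x : MZ p) :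
    (a * b).left x = a.left x * b.left (x * a.right) := by
  rw [SemidirectProduct.mul_left]; rfl

lemma inv_left_apply (a : GW p) (x : MZ p) :
    (a⁻¹).left x = (a.left (x * a.right⁻¹))⁻¹ := by
  rw [SemidirectProduct.inv_left]; rfl

/-- sign pattern -/
def sg (t : ZMod p) : ZMod p := if t = 0 then 1 else -1

lemma sg_mul_self (t : ZMod p) : sg p t * sg p t = 1 := by
  unfold sg; split <;> ring

lemma sg_ne_zero (t : ZMod p) : sg p t ≠ 0 := by
  unfold sg; split
  · exact one_ne_zero
  · simp

/-- scaling map -/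
def scg (c : ZMod p) (g : GW p) : GW p :=
  ⟨fun x => ofAdd (sg p (toAdd x + c) * toAdd (g.left x)), g.right⟩

def sigf (g : GW p) : GW p := scg p (toAdd g.right) g

lemma scg_right (c : ZMod p) (g : GW p) : (scg p c g).right = g.right := rfl
lemma scg_left_apply (c : ZMod p) (g : GW p) (x : MZ p) :
    (scg p c g).left x = ofAdd (sg p (toAdd x + c) * toAdd (g.left x)) := rfl

lemma sigf_invol : Function.Involutive (sigf p) := by
  intro g
  unfold sigf
  apply SemidirectProduct.ext
  · funext x
    simp only [scg_left_apply, scg_right, toAdd_ofAdd]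
    rw [← mul_assoc, sg_mul_self, one_mul, ofAdd_toAdd]
  · rfl

def sigE : Equiv.Perm (GW p) := (sigf_invol p).toPerm

lemma key_identity (g h : GW p) :
    sigf p h * (sigf p g)⁻¹ = scg p (toAdd h.right) (h * g⁻¹) := by
  apply SemidirectProduct.ext
  · funext x
    rw [mul_left_apply, inv_left_apply, scg_left_apply, mul_left_apply, inv_left_apply]
    show (sigf p h).left x * ((sigf p g).left (x * (sigf p h).right * ((sigf p g).right)⁻¹))⁻¹
        = ofAdd (sg p (toAdd x + toAdd h.right) * toAdd (h.left x * (g.left (x * h.right * g.right⁻¹))⁻¹))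
    unfold sigf
    rw [scg_left_apply, scg_right, scg_right, scg_left_apply]
    have harg : toAdd (x * h.right * (g.right)⁻¹) + toAdd g.right = toAdd x + toAdd h.right := by
      simp only [toAdd_mul, toAdd_inv]; ring
    rw [harg]
    rw [← ofAdd_neg, ← ofAdd_add]
    congr 1
    simp only [toAdd_mul, toAdd_inv]
    ring
  · show (h * g⁻¹).right = (h * g⁻¹).right
    rfl

/-! ## The connection set -/

def cvv (w : MZ p → MZ p) (t : ZMod p) : ZMod p := toAdd (w (ofAdd t))

def P0 (w : MZ p → MZ p) : Prop :=
  cvv p w 0 * cvv p w 0 = 1 ∧ (cvv p w 1 = 0 ∨ cvv p w 1 * cvv p w 1 = 1) ∧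
    ∀ s, s ≠ 0 → s ≠ 1 → cvv p w s = 0

def Pp (w : MZ p → MZ p) : Prop :=
  (∀ s, cvv p w s * cvv p w s = 1) ∧ (∏ s : ZMod p, cvv p w s) = 1

def Pm (w : MZ p → MZ p) : Prop :=
  (∀ s, cvv p w s * cvv p w s = 1) ∧ (∏ s : ZMod p, cvv p w s) = -1

def SS : Set (GW p) :=
  {g | (g.right = 1 ∧ P0 p g.left) ∨ (g.right = ofAdd 1 ∧ Pp p g.left) ∨
    (g.right = ofAdd (-1) ∧ Pm p g.left)}

lemma prod_sg (hodd : Odd p) (c : ZMod p) : (∏ t : ZMod p, sg p (t + c)) = 1 := by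
  have h1 : (∏ t : ZMod p, sg p (t + c)) = ∏ t : ZMod p, sg p t := by
    exact Equiv.prod_comp (Equiv.addRight c) (sg p)
  rw [h1, ← Finset.prod_filter_mul_prod_filter_not Finset.univ (fun t => t = 0) (sg p)]
  have h2 : (∏ t ∈ Finset.filter (fun t => t = 0) Finset.univ, sg p t) = 1 := by
    apply Finset.prod_eq_one
    intro t ht
    simp only [Finset.mem_filter] at ht
    simp [sg, ht.2]
  have h3 : (∏ t ∈ Finset.filter (fun t => ¬ t = 0) Finset.univ, sg p t)
      = (-1 : ZMod p) ^ (p - 1) := by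
    rw [Finset.prod_congr rfl (fun t ht => ?_), Finset.prod_const]
    · congr 1
      have : Finset.filter (fun t => ¬ t = 0) (Finset.univ : Finset (ZMod p))
          = Finset.univ.erase 0 := by
        ext t; simp [Finset.mem_erase, and_comm]
      rw [this, Finset.card_erase_of_mem (Finset.mem_univ _), Finset.card_univ, ZMod.card]
    · simp only [Finset.mem_filter] at ht
      simp [sg, ht.2]
  rw [h2, h3, one_mul]
  exact Even.neg_one_pow (Nat.Odd.sub_odd hodd odd_one)

lemma cvv_scg_left (c : ZMod p) (g : GW p) (t : ZMod p) :
    cvv p (scg p c g).left t = sg p (t + c) * cvv p g.left t := by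
  simp [cvv, scg_left_apply]

lemma scg_mem (hodd : Odd p) (c : ZMod p) (g : GW p) (hg : g ∈ SS p) : scg p c g ∈ SS p := by
  have hsq : ∀ t a, (sg p (t + c) * a) * (sg p (t + c) * a) = a * a := by
    intro t a
    rw [mul_mul_mul_comm, sg_mul_self, one_mul]
  have hprod : ∀ w : MZ p → MZ p, (∏ s : ZMod p, sg p (s + c) * cvv p w s)
      = ∏ s : ZMod p, cvv p w s := by
    intro w
    rw [Finset.prod_mul_distrib, prod_sg p hodd, one_mul]
  rcases hg with ⟨hr, h0, h1, h2⟩ | ⟨hr, h1, h2⟩ | ⟨hr, h1, h2⟩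
  · refine Or.inl ⟨hr, ?_, ?_, ?_⟩
    · rw [cvv_scg_left, hsq]; exact h0
    · rcases h1 with h1 | h1
      · exact Or.inl (by rw [cvv_scg_left, h1, mul_zero])
      · exact Or.inr (by rw [cvv_scg_left, hsq]; exact h1)
    · intro s hs0 hs1
      rw [cvv_scg_left, h2 s hs0 hs1, mul_zero]
  · refine Or.inr (Or.inl ⟨hr, fun s => ?_, ?_⟩)
    · rw [cvv_scg_left, hsq]; exact h1 s
    · calc (∏ s : ZMod p, cvv p (scg p c g).left s)
          = ∏ s : ZMod p, sg p (s + c) * cvv p g.left s :=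
            Finset.prod_congr rfl (fun s _ => cvv_scg_left p c g s)
        _ = 1 := by rw [hprod, h2]
  · refine Or.inr (Or.inr ⟨hr, fun s => ?_, ?_⟩)
    · rw [cvv_scg_left, hsq]; exact h1 s
    · calc (∏ s : ZMod p, cvv p (scg p c g).left s)
          = ∏ s : ZMod p, sg p (s + c) * cvv p g.left s :=
            Finset.prod_congr rfl (fun s _ => cvv_scg_left p c g s)
        _ = -1 := by rw [hprod, h2]

lemma scg_invol (c : ZMod p) : Function.Involutive (scg p c) := by
  intro g
  apply SemidirectProduct.ext
  · funext x
    simp only [scg_left_apply, toAdd_ofAdd]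
    rw [← mul_assoc, sg_mul_self, one_mul, ofAdd_toAdd]
  · rfl

lemma scg_mem_iff (hodd : Odd p) (c : ZMod p) (g : GW p) : scg p c g ∈ SS p ↔ g ∈ SS p := by
  constructor
  · intro h
    have := scg_mem p hodd c _ h
    rwa [scg_invol] at this
  · exact scg_mem p hodd c g

lemma two_ne_zero'' (hodd : Odd p) : (2 : ZMod p) ≠ 0 := by
  intro h
  have h2 : ((2 : ℕ) : ZMod p) = 0 := by exact_mod_cast h
  rw [CharP.cast_eq_zero_iff (ZMod p) p 2] at h2
  have hp2 : p = 2 := ((Nat.prime_dvd_prime_iff_eq (Fact.out : p.Prime) Nat.prime_two).mp h2)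
  rw [hp2] at hodd
  exact (Nat.not_odd_iff_even.mpr (even_two)) hodd

lemma one_ne_neg_one (hodd : Odd p) : (1 : ZMod p) ≠ -1 := by
  intro h
  exact two_ne_zero'' p hodd (by linear_combination h)

lemma cvv_inv_left (a : GW p) (t : ZMod p) :
    cvv p (a⁻¹).left t = - cvv p a.left (t - toAdd a.right) := by
  unfold cvv
  rw [inv_left_apply]
  have : (ofAdd t) * a.right⁻¹ = ofAdd (t - toAdd a.right) := by
    rw [← ofAdd_toAdd a.right⁻¹, ← ofAdd_add, toAdd_inv, sub_eq_add_neg]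
  rw [this, toAdd_inv]

lemma prod_neg_shift (hodd : Odd p) (w : MZ p → MZ p) (d : ZMod p) :
    (∏ t : ZMod p, (- cvv p w (t - d))) = - ∏ t : ZMod p, cvv p w t := by
  have h1 : (∏ t : ZMod p, (- cvv p w (t - d)))
      = (∏ t : ZMod p, (-1 : ZMod p)) * ∏ t : ZMod p, cvv p w (t - d) := by
    rw [← Finset.prod_mul_distrib]
    exact Finset.prod_congr rfl (fun t _ => by ring)
  have h2 : (∏ t : ZMod p, (-1 : ZMod p)) = -1 := by
    rw [Finset.prod_const, Finset.card_univ, ZMod.card]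
    exact Odd.neg_one_pow hodd
  have h3 : (∏ t : ZMod p, cvv p w (t - d)) = ∏ t : ZMod p, cvv p w t :=
    Equiv.prod_comp (Equiv.subRight d) (cvv p w)
  rw [h1, h2, h3, neg_one_mul]

lemma SS_inv_closed (hodd : Odd p) : ∀ s ∈ SS p, s⁻¹ ∈ SS p := by
  intro a ha
  rcases ha with ⟨hr, h0, h1, h2⟩ | ⟨hr, h1, h2⟩ | ⟨hr, h1, h2⟩
  · refine Or.inl ⟨by rw [SemidirectProduct.inv_right, hr, inv_one], ?_, ?_, ?_⟩
    · rw [cvv_inv_left, hr]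
      show (- cvv p a.left (0 - toAdd (1 : MZ p))) * (- cvv p a.left (0 - toAdd (1 : MZ p))) = 1
      have : (0 : ZMod p) - toAdd (1 : MZ p) = 0 := by simp
      rw [this, neg_mul_neg]; exact h0
    · rw [cvv_inv_left, hr]
      have h1' : (1 : ZMod p) - toAdd (1 : MZ p) = 1 := by simp
      rw [h1']
      rcases h1 with h | h
      · exact Or.inl (by rw [h, neg_zero])
      · exact Or.inr (by rw [neg_mul_neg]; exact h)
    · intro s hs0 hs1
      rw [cvv_inv_left, hr]
      have : s - toAdd (1 : MZ p) = s := by simp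
      rw [this, h2 s hs0 hs1, neg_zero]
  · refine Or.inr (Or.inr ⟨?_, fun s => ?_, ?_⟩)
    · rw [SemidirectProduct.inv_right, hr, ← ofAdd_neg]
    · rw [cvv_inv_left, neg_mul_neg]; exact h1 _
    · have : (∏ t : ZMod p, cvv p (a⁻¹).left t)
          = ∏ t : ZMod p, (- cvv p a.left (t - toAdd a.right)) :=
        Finset.prod_congr rfl (fun t _ => cvv_inv_left p a t)
      rw [this, prod_neg_shift p hodd, h2]
  · refine Or.inr (Or.inl ⟨?_, fun s => ?_, ?_⟩)
    · rw [SemidirectProduct.inv_right, hr, ← ofAdd_neg, neg_neg]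
    · rw [cvv_inv_left, neg_mul_neg]; exact h1 _
    · have : (∏ t : ZMod p, cvv p (a⁻¹).left t)
          = ∏ t : ZMod p, (- cvv p a.left (t - toAdd a.right)) :=
        Finset.prod_congr rfl (fun t _ => cvv_inv_left p a t)
      rw [this, prod_neg_shift p hodd, h2, neg_neg]

/-! ## sigma is a digraph automorphism -/

lemma cayAdj_iff {Γ : Type*} [Group Γ] (S : Set Γ) (g h : Γ) :
    cayAdj S g h ↔ h * g⁻¹ ∈ S := by
  constructor
  · rintro ⟨s, hs, rfl⟩
    simpa using hs
  · intro hm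
    exact ⟨h * g⁻¹, hm, by group⟩

lemma sigE_apply (g : GW p) : (sigE p) g = sigf p g := rfl

lemma sigE_mem (hodd : Odd p) : sigE p ∈ digraphAut (cayAdj (SS p)) := by
  show ∀ x y, cayAdj (SS p) ((sigE p) x) ((sigE p) y) ↔ cayAdj (SS p) x y
  intro x y
  rw [sigE_apply, sigE_apply, cayAdj_iff, cayAdj_iff, key_identity]
  exact scg_mem_iff p hodd _ _

def xwit : GW p := SemidirectProduct.inl (fun _ => ofAdd 1)

lemma sigf_fix_one : sigf p 1 = 1 := by
  apply SemidirectProduct.ext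
  · funext x
    show ofAdd (sg p (toAdd x + toAdd (1 : GW p).right) * toAdd ((1 : GW p).left x)) = (1 : GW p).left x
    rw [SemidirectProduct.one_left]
    show ofAdd (sg p _ * toAdd (1 : MZ p)) = (1 : MZ p)
    simp
  · rfl

lemma sigf_moves_xwit (hodd : Odd p) : sigf p (xwit p) ≠ xwit p := by
  intro h
  have h2 := congrArg (fun g : GW p => toAdd (g.left (ofAdd (1 : ZMod p)))) h
  simp only [xwit] at h2
  rw [sigf] at h2
  rw [scg_left_apply] at h2
  simp only [SemidirectProduct.left_inl, SemidirectProduct.right_inl, toAdd_ofAdd] at h2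
  rw [toAdd_one, add_zero, mul_one] at h2
  have hsg : sg p 1 = -1 := by
    unfold sg
    rw [if_neg one_ne_zero]
  rw [hsg] at h2
  exact one_ne_neg_one p hodd h2.symm

lemma not_isDRR (hodd : Odd p) : ¬ IsDRR (GW p) (cayAdj (SS p)) := by
  rintro ⟨-, hreg⟩
  obtain ⟨σ₀, _, huniq⟩ := hreg 1 1
  have h1 : ((1 : digraphAut (cayAdj (SS p))) : Equiv.Perm (GW p)) 1 = 1 := rfl
  have hs : ((⟨sigE p, sigE_mem p hodd⟩ : digraphAut (cayAdj (SS p))) : Equiv.Perm (GW p)) 1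
      = 1 := by
    rw [sigE_apply]
    exact sigf_fix_one p
  have e1 := huniq _ h1
  have e2 := huniq _ hs
  have heq : (⟨sigE p, sigE_mem p hodd⟩ : digraphAut (cayAdj (SS p)))
      = (1 : digraphAut (cayAdj (SS p))) := by rw [e1, e2]
  have heq2 : sigE p = 1 := congrArg Subtype.val heq
  have := congrArg (fun e : Equiv.Perm (GW p) => e (xwit p)) heq2
  simp only [Equiv.Perm.one_apply] at this
  rw [sigE_apply] at this
  exact sigf_moves_xwit p hodd this

/-! ## Every automorphism preserves the base group -/

lemma const_of_shift_invariant (d : ZMod p → ZMod p) (k : ZMod p) (hk : k ≠ 0)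
    (hinv : ∀ t, d (t + k) = d t) : ∀ t, d t = d 0 := by
  have haux : ∀ n : ℕ, d ((n : ZMod p) * k) = d 0 := by
    intro n
    induction n with
    | zero => simp
    | succ n ih =>
      have : (((n : ℕ) + 1 : ℕ) : ZMod p) * k = (n : ZMod p) * k + k := by push_cast; ring
      rw [this, hinv]
      exact ih
  intro t
  have ht : t = (((t * k⁻¹).val : ℕ) : ZMod p) * k := by
    rw [ZMod.natCast_rightInverse _, mul_assoc, inv_mul_cancel₀ hk, mul_one]
  rw [ht, haux]

lemma commute_left_eq (c h : GW p) (hch : c * h = h * c) (x : MZ p) :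
    c.left x * h.left (x * c.right) = h.left x * c.left (x * h.right) := by
  have h1 := congrArg (fun g : GW p => g.left x) hch
  simpa only [mul_left_apply] using h1

lemma right_of_image_inl (hodd : Odd p) (φ : MulAut (GW p)) (b : MZ p → MZ p) :
    (φ (SemidirectProduct.inl b)).right = 1 := by
  by_contra hb
  set h : GW p := φ (SemidirectProduct.inl b) with hh
  have hk : toAdd h.right ≠ 0 := by
    intro h0
    exact hb (by rw [← ofAdd_toAdd h.right, h0, ofAdd_zero])
  have hcomm : ∀ b' : MZ p → MZ p, (φ (SemidirectProduct.inl b')) * h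
      = h * (φ (SemidirectProduct.inl b')) := by
    intro b'
    rw [hh]
    calc φ (SemidirectProduct.inl b') * φ (SemidirectProduct.inl b)
        = φ (SemidirectProduct.inl b' * SemidirectProduct.inl b) := (map_mul φ _ _).symm
      _ = φ (SemidirectProduct.inl (b' * b)) := by rw [← map_mul]
      _ = φ (SemidirectProduct.inl (b * b')) := by rw [mul_comm b' b]
      _ = φ (SemidirectProduct.inl b * SemidirectProduct.inl b') := by rw [map_mul]
      _ = φ (SemidirectProduct.inl b) * φ (SemidirectProduct.inl b') := map_mul φ _ _
  -- the injection
  let F : (MZ p → MZ p) → ZMod p × ZMod p := fun b' =>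
    (toAdd ((φ (SemidirectProduct.inl b')).right), toAdd ((φ (SemidirectProduct.inl b')).left 1))
  have hinj : Function.Injective F := by
    intro b1 b2 hF
    set c := φ (SemidirectProduct.inl b1) with hc
    set c' := φ (SemidirectProduct.inl b2) with hc'
    have hr : c.right = c'.right := by
      have := congrArg Prod.fst hF
      simp only [F] at this
      rw [← ofAdd_toAdd c.right, ← ofAdd_toAdd c'.right]
      exact congrArg ofAdd this
    have hl0 : toAdd (c.left 1) = toAdd (c'.left 1) := congrArg Prod.snd hF
    set D : ZMod p → ZMod p := fun t => toAdd (c.left (ofAdd t)) - toAdd (c'.left (ofAdd t))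
      with hD
    have hDinv : ∀ t, D (t + toAdd h.right) = D t := by
      intro t
      have e1 := commute_left_eq p c h (hcomm b1) (ofAdd t)
      have e2 := commute_left_eq p c' h (hcomm b2) (ofAdd t)
      rw [← hr] at e2
      have e1' := congrArg toAdd e1
      have e2' := congrArg toAdd e2
      simp only [toAdd_mul] at e1' e2'
      have hx : (ofAdd t) * h.right = ofAdd (t + toAdd h.right) := by
        rw [← ofAdd_toAdd h.right, ← ofAdd_add, toAdd_ofAdd]
      rw [hx] at e1' e2'
      simp only [hD]
      linear_combination e2' - e1'
    have hD0 : D 0 = 0 := by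
      simp only [hD, ofAdd_zero]
      rw [hl0]
      ring
    have hDall : ∀ t, D t = 0 := fun t => by
      rw [const_of_shift_invariant p D (toAdd h.right) hk hDinv t, hD0]
    have hleft : c.left = c'.left := by
      funext x
      have := hDall (toAdd x)
      simp only [hD, ofAdd_toAdd] at this
      have h2 : toAdd (c.left x) = toAdd (c'.left x) := by linear_combination this
      rw [← ofAdd_toAdd (c.left x), ← ofAdd_toAdd (c'.left x), h2]
    have hcc : c = c' := SemidirectProduct.ext hleft hr
    have := φ.injective (hc ▸ hc' ▸ hcc)
    exact congrArg SemidirectProduct.left this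
  have hcard := Fintype.card_le_of_injective F hinj
  have hcard1 : Fintype.card (MZ p → MZ p) = p ^ p := by
    rw [Fintype.card_fun]
    have hm : Fintype.card (MZ p) = p := by
      rw [Fintype.card_congr Multiplicative.toAdd, ZMod.card]
    rw [hm]
  have hcard2 : Fintype.card (ZMod p × ZMod p) = p ^ 2 := by
    rw [Fintype.card_prod, ZMod.card, sq]
  rw [hcard1, hcard2] at hcard
  have hp3 : 2 < p := by
    rcases Nat.lt_or_ge 2 p with h | h
    · exact h
    · exfalso
      have hp2 : p = 2 := le_antisymm h (Fact.out : p.Prime).two_le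
      rw [hp2] at hodd
      exact (Nat.not_odd_iff_even.mpr even_two) hodd
  exact absurd hcard (not_le.mpr (Nat.pow_lt_pow_right (lt_trans one_lt_two hp3) hp3))

/-! ## Semilinearity -/

lemma conj_inl (c : GW p) (b : MZ p → MZ p) :
    c * SemidirectProduct.inl b * c⁻¹ = SemidirectProduct.inl (fun x => b (x * c.right)) := by
  apply SemidirectProduct.ext
  · funext x
    rw [mul_left_apply, mul_left_apply, inv_left_apply]
    have hr1 : (c * SemidirectProduct.inl b).right = c.right := by
      simp
    rw [hr1]
    simp only [SemidirectProduct.left_inl, SemidirectProduct.right_inl]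
    rw [mul_inv_cancel_right x c.right, mul_comm (c.left x) _]
    exact mul_inv_cancel_right (b (x * c.right)) (c.left x)
  · show c.right * (1 : MZ p) * c.right⁻¹ = (1 : MZ p)
    group

def Efun (s : ZMod p) : MZ p → MZ p := fun x => ofAdd (if toAdd x = s then 1 else 0)

lemma cvv_Efun (s t : ZMod p) : cvv p (Efun p s) t = if t = s then 1 else 0 := by
  simp [cvv, Efun]

lemma Efun_shift (s : ZMod p) :
    (fun x => Efun p s (x * ofAdd (1:ZMod p))) = Efun p (s - 1) := by
  funext x
  simp only [Efun, toAdd_mul, toAdd_ofAdd]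
  have hiff : (toAdd x + 1 = s) = (toAdd x = s - 1) := by
    simp only [eq_iff_iff]
    constructor
    · intro h; linear_combination h
    · intro h; linear_combination h
  simp only [hiff]

section Pin

variable (φ : MulAut (GW p))

lemma image_inl_eq (hodd : Odd p) (b : MZ p → MZ p) :
    φ (SemidirectProduct.inl b) = SemidirectProduct.inl ((φ (SemidirectProduct.inl b)).left) := by
  apply SemidirectProduct.ext
  · rw [SemidirectProduct.left_inl]
  · rw [SemidirectProduct.right_inl]
    exact right_of_image_inl p hodd φ b

lemma semilin (hodd : Odd p) (b : MZ p → MZ p) :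
    (φ (SemidirectProduct.inl (fun x => b (x * ofAdd (1:ZMod p))))).left
      = fun x => (φ (SemidirectProduct.inl b)).left
          (x * (φ (SemidirectProduct.inr (ofAdd (1:ZMod p)))).right) := by
  have hconj := conj_inl p (SemidirectProduct.inr (ofAdd (1:ZMod p))) b
  rw [SemidirectProduct.right_inr] at hconj
  have himg := congrArg φ hconj
  rw [map_mul, map_mul, map_inv] at himg
  rw [image_inl_eq p φ hodd b] at himg
  rw [conj_inl] at himg
  have := congrArg SemidirectProduct.left himg
  rw [SemidirectProduct.left_inl] at this
  exact this.symm

lemma phiB_Efun_nat (hodd : Odd p) (n : ℕ) :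
    (φ (SemidirectProduct.inl (Efun p (-(n : ZMod p))))).left
      = fun x => (φ (SemidirectProduct.inl (Efun p 0))).left
          (x * ((φ (SemidirectProduct.inr (ofAdd (1:ZMod p)))).right) ^ n) := by
  induction n with
  | zero => simp
  | succ n ih =>
    have hsh : Efun p (-((n:ℕ)+1 : ZMod p)) = fun x => Efun p (-(n : ZMod p)) (x * ofAdd 1) := by
      rw [Efun_shift]
      congr 1
      push_cast
      ring
    have : Efun p (-(((n:ℕ)+1 : ℕ)  : ZMod p)) = fun x => Efun p (-(n : ZMod p)) (x * ofAdd 1) := by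
      rw [← hsh]
      congr 1
      push_cast
      ring
    rw [this, semilin p φ hodd, ih]
    funext x
    beta_reduce
    rw [mul_assoc, ← pow_succ']
end Pin

/-! ## Coordinates of images of basis vectors -/

lemma cvv_phiB_Efun (hodd : Odd p) (φ : MulAut (GW p)) (s t : ZMod p) :
    cvv p (φ (SemidirectProduct.inl (Efun p s))).left t
      = cvv p (φ (SemidirectProduct.inl (Efun p 0))).left
          (t + (-s) * toAdd ((φ (SemidirectProduct.inr (ofAdd (1:ZMod p)))).right)) := by
  have hs : Efun p s = Efun p (-((((-s).val) : ℕ) : ZMod p)) := by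
    rw [ZMod.natCast_rightInverse _, neg_neg]
  rw [hs, phiB_Efun_nat p φ hodd ((-s).val)]
  unfold cvv
  beta_reduce
  congr 1
  rw [← ofAdd_toAdd (((φ (SemidirectProduct.inr (ofAdd (1:ZMod p)))).right) ^ (-s).val),
    ← ofAdd_add]
  congr 1
  rw [toAdd_pow, nsmul_eq_mul, ZMod.natCast_rightInverse _]

lemma P0_Efun0 : P0 p (Efun p 0) := by
  refine ⟨?_, Or.inl ?_, ?_⟩
  · rw [cvv_Efun, if_pos rfl, mul_one]
  · rw [cvv_Efun, if_neg one_ne_zero]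
  · intro s hs0 _
    rw [cvv_Efun, if_neg hs0]

lemma cvv_mul (w w' : MZ p → MZ p) (t : ZMod p) :
    cvv p (w * w') t = cvv p w t + cvv p w' t := by
  simp [cvv]

lemma cvv_inv (w : MZ p → MZ p) (t : ZMod p) : cvv p (w⁻¹) t = - cvv p w t := by
  simp [cvv]

lemma P0_E01 : P0 p (Efun p 0 * (Efun p 1)⁻¹) := by
  refine ⟨?_, Or.inr ?_, ?_⟩
  · rw [cvv_mul, cvv_inv, cvv_Efun, cvv_Efun, if_pos rfl, if_neg (zero_ne_one (α := ZMod p))]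
    norm_num
  · rw [cvv_mul, cvv_inv, cvv_Efun, cvv_Efun, if_pos rfl, if_neg one_ne_zero]
    norm_num
  · intro s hs0 hs1
    rw [cvv_mul, cvv_inv, cvv_Efun, cvv_Efun, if_neg hs0, if_neg hs1]
    norm_num

lemma inl_mem_SS (w : MZ p → MZ p) (hw : P0 p w) : (SemidirectProduct.inl w : GW p) ∈ SS p := by
  refine Or.inl ⟨SemidirectProduct.right_inl _, ?_⟩
  rwa [SemidirectProduct.left_inl]

lemma image_P0 (hodd : Odd p) (φ : MulAut (GW p)) (hfwd : ∀ s ∈ SS p, φ s ∈ SS p)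
    (w : MZ p → MZ p) (hw : P0 p w) : P0 p ((φ (SemidirectProduct.inl w)).left) := by
  have himg := hfwd _ (inl_mem_SS p w hw)
  have hr := right_of_image_inl p hodd φ w
  rcases himg with ⟨_, h⟩ | ⟨hr2, _⟩ | ⟨hr2, _⟩
  · exact h
  · exfalso
    rw [hr] at hr2
    have := congrArg toAdd hr2
    rw [toAdd_one, toAdd_ofAdd] at this
    exact one_ne_zero this.symm
  · exfalso
    rw [hr] at hr2
    have := congrArg toAdd hr2
    rw [toAdd_one, toAdd_ofAdd] at this
    exact one_ne_zero (neg_eq_zero.mp this.symm)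

/-! ## Decomposition of base elements -/

lemma pow_Efun_apply (s : ZMod p) (n : ℕ) (x : MZ p) (c : ZMod p) :
    ((fun y => ofAdd (c * toAdd (Efun p s y))) ^ n) x
      = if toAdd x = s then ofAdd ((n : ZMod p) * c) else 1 := by
  rw [Pi.pow_apply]
  show (ofAdd (c * toAdd (ofAdd (if toAdd x = s then 1 else 0)))) ^ n = _
  rw [toAdd_ofAdd]
  by_cases h : toAdd x = s
  · rw [if_pos h, if_pos h, mul_one, ← ofAdd_nsmul, nsmul_eq_mul]
  · rw [if_neg h, if_neg h, mul_zero, ofAdd_zero, one_pow]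

lemma prod_scaled_Efun (w : MZ p → MZ p) (c : ZMod p) :
    (∏ s : ZMod p, (fun y => ofAdd (c * toAdd (Efun p s y))) ^ (cvv p w s).val)
      = fun x => ofAdd (c * toAdd (w x)) := by
  funext x
  rw [Finset.prod_apply]
  have h1 : ∀ s ∈ Finset.univ, ((fun y => ofAdd (c * toAdd (Efun p s y))) ^ (cvv p w s).val) x
      = if toAdd x = s then ofAdd (cvv p w s * c) else 1 := by
    intro s _
    rw [pow_Efun_apply, ZMod.natCast_rightInverse _]
  rw [Finset.prod_congr rfl h1, Finset.prod_ite_eq]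
  rw [if_pos (Finset.mem_univ _)]
  show ofAdd (cvv p w (toAdd x) * c) = _
  unfold cvv
  rw [ofAdd_toAdd, mul_comm]

lemma Efun_scaled_one (s : ZMod p) :
    (fun y => ofAdd ((1:ZMod p) * toAdd (Efun p s y))) = Efun p s := by
  funext y
  rw [one_mul, ofAdd_toAdd]

lemma decompW (w : MZ p → MZ p) :
    w = ∏ s : ZMod p, (Efun p s) ^ (cvv p w s).val := by
  have h2 : (∏ s : ZMod p, (Efun p s) ^ (cvv p w s).val)
      = ∏ s : ZMod p, (fun y => ofAdd ((1:ZMod p) * toAdd (Efun p s y))) ^ (cvv p w s).val := by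
    refine Finset.prod_congr rfl (fun s _ => ?_)
    rw [Efun_scaled_one]
  rw [h2, prod_scaled_Efun]
  funext x
  rw [one_mul, ofAdd_toAdd]

/-- the restriction of `φ` to the base group, as a monoid hom of the base -/
def phiB (hodd : Odd p) (φ : MulAut (GW p)) : (MZ p → MZ p) →* (MZ p → MZ p) where
  toFun b := (φ (SemidirectProduct.inl b)).left
  map_one' := by
    show (φ (SemidirectProduct.inl 1)).left = 1
    rw [map_one, map_one]
    rfl
  map_mul' b b' := by
    have h1 : φ (SemidirectProduct.inl (b * b'))
        = φ (SemidirectProduct.inl b) * φ (SemidirectProduct.inl b') := by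
      rw [← map_mul, ← map_mul]
    have h2 := congrArg SemidirectProduct.left h1
    rw [SemidirectProduct.mul_left, right_of_image_inl p hodd φ b, map_one] at h2
    simpa using h2

lemma phiB_apply (hodd : Odd p) (φ : MulAut (GW p)) (b : MZ p → MZ p) :
    phiB p hodd φ b = (φ (SemidirectProduct.inl b)).left := rfl

lemma phi_inl_scaled (hodd : Odd p) (φ : MulAut (GW p)) (η : ZMod p)
    (hE : ∀ s, (φ (SemidirectProduct.inl (Efun p s))).left
      = fun x => ofAdd (η * toAdd (Efun p s x)))
    (w : MZ p → MZ p) :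
    (φ (SemidirectProduct.inl w)).left = fun x => ofAdd (η * toAdd (w x)) := by
  rw [← phiB_apply p hodd]
  calc phiB p hodd φ w
      = phiB p hodd φ (∏ s : ZMod p, (Efun p s) ^ (cvv p w s).val) := by rw [← decompW]
    _ = ∏ s : ZMod p, (phiB p hodd φ (Efun p s)) ^ (cvv p w s).val := by
        rw [map_prod]
        exact Finset.prod_congr rfl (fun s _ => by rw [map_pow])
    _ = ∏ s : ZMod p, (fun x => ofAdd (η * toAdd (Efun p s x))) ^ (cvv p w s).val := by
        refine Finset.prod_congr rfl (fun s _ => ?_)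
        rw [phiB_apply, hE s]
    _ = fun x => ofAdd (η * toAdd (w x)) := prod_scaled_Efun p w η

/-! ## Aut(G,S) is trivial -/

lemma allones_Pp : Pp p (fun _ => ofAdd (1 : ZMod p)) := by
  constructor
  · intro s
    show toAdd (ofAdd (1:ZMod p)) * toAdd (ofAdd (1:ZMod p)) = 1
    rw [toAdd_ofAdd, mul_one]
  · have : ∀ t ∈ Finset.univ, cvv p (fun _ => ofAdd (1 : ZMod p)) t = 1 := by
      intro t _
      show toAdd (ofAdd (1:ZMod p)) = 1
      rw [toAdd_ofAdd]
    rw [Finset.prod_congr rfl this, Finset.prod_const_one]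

def flp (s : ZMod p) : MZ p → MZ p :=
  fun x => ofAdd (if toAdd x = s ∨ toAdd x = s + 1 then (-1 : ZMod p) else 1)

lemma cvv_flp (s t : ZMod p) :
    cvv p (flp p s) t = if t = s ∨ t = s + 1 then (-1 : ZMod p) else 1 := by
  simp [cvv, flp]

lemma flp_Pp (s : ZMod p) : Pp p (flp p s) := by
  constructor
  · intro t
    rw [cvv_flp]
    by_cases h : t = s ∨ t = s + 1
    · rw [if_pos h]; ring
    · rw [if_neg h]; ring
  · have hcong : ∀ t ∈ Finset.univ, cvv p (flp p s) t
        = if t = s ∨ t = s + 1 then (-1 : ZMod p) else 1 :=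
      fun t _ => cvv_flp p s t
    rw [Finset.prod_congr rfl hcong]
    rw [← Finset.prod_filter_mul_prod_filter_not Finset.univ (fun t => t = s ∨ t = s + 1)]
    have h1 : (∏ t ∈ Finset.filter (fun t => t = s ∨ t = s + 1) Finset.univ,
        if t = s ∨ t = s + 1 then (-1 : ZMod p) else 1) = (-1 : ZMod p) ^ 2 := by
      have hset : Finset.filter (fun t => t = s ∨ t = s + 1) (Finset.univ : Finset (ZMod p))
          = {s, s + 1} := by
        ext t; simp
      rw [hset]
      have hne : s ≠ s + 1 := by
        intro h
        have : (1 : ZMod p) = 0 := by linear_combination -h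
        exact one_ne_zero this
      rw [Finset.prod_insert (by simp [hne])]
      rw [Finset.prod_singleton]
      rw [if_pos (Or.inl rfl), if_pos (Or.inr rfl)]
      ring
    have h2 : (∏ t ∈ Finset.filter (fun t => ¬(t = s ∨ t = s + 1)) Finset.univ,
        if t = s ∨ t = s + 1 then (-1 : ZMod p) else 1) = 1 := by
      apply Finset.prod_eq_one
      intro t ht
      simp only [Finset.mem_filter] at ht
      rw [if_neg ht.2]
    rw [h1, h2, mul_one, neg_one_sq]

theorem autGS_trivial (hodd : Odd p) : AutGSTrivial (SS p) := by
  intro φ hφS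
  have hfwd : ∀ s ∈ SS p, φ s ∈ SS p := fun s hs => by
    rw [← hφS]; exact Set.mem_image_of_mem _ hs
  have hq1ne : toAdd (ofAdd (1:ZMod p)) ≠ 0 := by rw [toAdd_ofAdd]; exact one_ne_zero
  set ma : ZMod p := toAdd ((φ (SemidirectProduct.inr (ofAdd (1:ZMod p)))).right) with hma
  have hma0 : ma ≠ 0 := by
    intro h0
    have h1 : φ (SemidirectProduct.inr (ofAdd (1:ZMod p)))
        = SemidirectProduct.inl ((φ (SemidirectProduct.inr (ofAdd (1:ZMod p)))).left) := by
      apply SemidirectProduct.ext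
      · rw [SemidirectProduct.left_inl]
      · rw [SemidirectProduct.right_inl,
          ← ofAdd_toAdd ((φ (SemidirectProduct.inr (ofAdd (1:ZMod p)))).right), ← hma, h0,
          ofAdd_zero]
    have h2 := congrArg (φ.symm) h1
    rw [MulEquiv.symm_apply_apply] at h2
    have h3 := congrArg SemidirectProduct.right h2
    rw [SemidirectProduct.right_inr,
      right_of_image_inl p hodd (φ.symm : MulAut (GW p))] at h3
    exact hq1ne (by rw [h3, toAdd_one])
  set g := (φ (SemidirectProduct.inl (Efun p 0))).left with hgdef
  have hP0g : P0 p g := image_P0 p hodd φ hfwd _ (P0_Efun0 p)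
  set v := (φ (SemidirectProduct.inl (Efun p 0 * (Efun p 1)⁻¹))).left with hvdef
  have hP0v : P0 p v := image_P0 p hodd φ hfwd _ (P0_E01 p)
  have hvf : ∀ t, cvv p v t = cvv p g t - cvv p g (t - ma) := by
    intro t
    have h1 : v = phiB p hodd φ (Efun p 0) * (phiB p hodd φ (Efun p 1))⁻¹ := by
      rw [hvdef, ← map_inv, ← map_mul]
      rfl
    rw [h1, cvv_mul, cvv_inv, phiB_apply, phiB_apply]
    rw [cvv_phiB_Efun p hodd φ 1 t]
    have h2 : t + (-1 : ZMod p) * ma = t - ma := by ring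
    rw [h2, ← hgdef]
    ring
  have hma1 : ma = 1 := by
    by_contra hmane
    have hgm : cvv p g ma = 0 := hP0g.2.2 ma hma0 hmane
    have h1 := hP0v.2.2 ma hma0 hmane
    rw [hvf, hgm, sub_self] at h1
    have h4 : cvv p g 0 = 0 := by linear_combination -h1
    have h5 := hP0g.1
    rw [h4, zero_mul] at h5
    exact zero_ne_one h5
  have hg1 : cvv p g 1 = 0 := by
    have h20 : (2 : ZMod p) ≠ 0 := two_ne_zero'' p hodd
    have h21 : (2 : ZMod p) ≠ 1 := fun h => one_ne_zero (α := ZMod p) (by linear_combination h)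
    have h1 := hP0v.2.2 2 h20 h21
    rw [hvf] at h1
    have h2 : cvv p g 2 = 0 := hP0g.2.2 2 h20 h21
    have h3 : (2 : ZMod p) - ma = 1 := by rw [hma1]; ring
    rw [h2, h3] at h1
    linear_combination -h1
  set η := cvv p g 0 with hηdef
  have hηη : η * η = 1 := hP0g.1
  have hη0 : η ≠ 0 := by
    intro h
    rw [h, zero_mul] at hηη
    exact zero_ne_one hηη
  have hE : ∀ s, (φ (SemidirectProduct.inl (Efun p s))).left
      = fun x => ofAdd (η * toAdd (Efun p s x)) := by
    intro s
    funext x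
    have h1 : cvv p (φ (SemidirectProduct.inl (Efun p s))).left (toAdd x)
        = η * (if toAdd x = s then 1 else 0) := by
      rw [cvv_phiB_Efun p hodd φ s (toAdd x)]
      have h2 : toAdd x + -s * ma = toAdd x - s := by rw [hma1]; ring
      rw [← hma, h2, ← hgdef]
      by_cases hxs : toAdd x = s
      · rw [hxs, sub_self, if_pos rfl, mul_one, ← hηdef]
      · rw [if_neg hxs, mul_zero]
        by_cases hxs1 : toAdd x - s = 1
        · rw [hxs1]; exact hg1
        · exact hP0g.2.2 _ (sub_ne_zero.mpr hxs) hxs1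
    unfold cvv at h1
    rw [ofAdd_toAdd] at h1
    rw [← ofAdd_toAdd ((φ (SemidirectProduct.inl (Efun p s))).left x), h1]
    show ofAdd (η * _) = ofAdd (η * toAdd (ofAdd (if toAdd x = s then (1:ZMod p) else 0)))
    rw [toAdd_ofAdd]
  set u := (φ (SemidirectProduct.inr (ofAdd (1:ZMod p)))).left with hudef
  have hMq : (φ (SemidirectProduct.inr (ofAdd (1:ZMod p)))).right = ofAdd (1:ZMod p) := by
    rw [← ofAdd_toAdd ((φ (SemidirectProduct.inr (ofAdd (1:ZMod p)))).right), ← hma, hma1]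
  have hlevel : ∀ w, Pp p w → Pp p (fun x => ofAdd (η * toAdd (w x)) * u x) := by
    intro w hw
    have hEmem : (SemidirectProduct.inl w * SemidirectProduct.inr (ofAdd (1:ZMod p)) : GW p)
        ∈ SS p := by
      refine Or.inr (Or.inl ⟨?_, ?_⟩)
      · rw [SemidirectProduct.mul_right, SemidirectProduct.right_inl,
          SemidirectProduct.right_inr, one_mul]
      · have hlw : (SemidirectProduct.inl w
            * SemidirectProduct.inr (ofAdd (1:ZMod p)) : GW p).left = w := by
          funext y
          rw [mul_left_apply, SemidirectProduct.left_inl, SemidirectProduct.left_inr,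
            Pi.one_apply, mul_one]
        rwa [hlw]
    have himg := hfwd _ hEmem
    have hφE : φ (SemidirectProduct.inl w * SemidirectProduct.inr (ofAdd (1:ZMod p)))
        = φ (SemidirectProduct.inl w) * φ (SemidirectProduct.inr (ofAdd (1:ZMod p))) :=
      map_mul φ _ _
    have hleft : (φ (SemidirectProduct.inl w
        * SemidirectProduct.inr (ofAdd (1:ZMod p)))).left
        = fun x => ofAdd (η * toAdd (w x)) * u x := by
      rw [hφE]
      funext x
      rw [mul_left_apply, right_of_image_inl p hodd φ w, mul_one]
      rw [phi_inl_scaled p hodd φ η hE w, ← hudef]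
    have hright : (φ (SemidirectProduct.inl w
        * SemidirectProduct.inr (ofAdd (1:ZMod p)))).right = ofAdd (1:ZMod p) := by
      rw [hφE, SemidirectProduct.mul_right, right_of_image_inl p hodd φ w, one_mul, hMq]
    rcases himg with ⟨hr, _⟩ | ⟨_, hPp⟩ | ⟨hr, _⟩
    · exfalso
      rw [hright] at hr
      exact hq1ne (by rw [hr, toAdd_one])
    · rwa [hleft] at hPp
    · exfalso
      rw [hright] at hr
      have := congrArg toAdd hr
      rw [toAdd_ofAdd, toAdd_ofAdd] at this
      exact one_ne_neg_one p hodd this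
  have hu0 : ∀ s, cvv p u s = 0 := by
    intro s
    have c1 := (hlevel _ (allones_Pp p)).1 s
    have c2 := (hlevel _ (flp_Pp p s)).1 s
    have hc1 : cvv p (fun x => ofAdd (η * toAdd ((fun _ => ofAdd (1:ZMod p)) x)) * u x) s
        = η + cvv p u s := by
      unfold cvv
      rw [toAdd_mul, toAdd_ofAdd, toAdd_ofAdd, mul_one]
    have hc2 : cvv p (fun x => ofAdd (η * toAdd (flp p s x)) * u x) s
        = -η + cvv p u s := by
      unfold cvv
      rw [toAdd_mul, toAdd_ofAdd]
      show η * toAdd (flp p s (ofAdd s)) + _ = _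
      have : toAdd (flp p s (ofAdd s)) = -1 := by
        unfold flp
        rw [toAdd_ofAdd, toAdd_ofAdd, if_pos (Or.inl rfl)]
      rw [this]
      ring
    rw [hc1] at c1
    rw [hc2] at c2
    have h4 : (4 * η) * cvv p u s = 0 := by linear_combination c1 - c2
    have h4ne : (4 : ZMod p) * η ≠ 0 := by
      apply mul_ne_zero _ hη0
      have : (4 : ZMod p) = 2 * 2 := by norm_num
      rw [this]
      exact mul_ne_zero (two_ne_zero'' p hodd) (two_ne_zero'' p hodd)
    rcases mul_eq_zero.mp h4 with h | h
    · exact absurd h h4ne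
    · exact h
  have hu1 : u = 1 := by
    funext x
    have h := hu0 (toAdd x)
    unfold cvv at h
    rw [ofAdd_toAdd] at h
    show u x = (1 : MZ p)
    rw [← ofAdd_toAdd (u x), h, ofAdd_zero]
  have hη1 : η = 1 := by
    rcases mul_self_eq_one_iff.mp hηη with h | h
    · exact h
    · exfalso
      have hPw := (hlevel _ (allones_Pp p)).2
      have hcv : ∀ t ∈ Finset.univ,
          cvv p (fun x => ofAdd (η * toAdd ((fun _ => ofAdd (1:ZMod p)) x)) * u x) t
          = -1 := by
        intro t _
        unfold cvv
        rw [toAdd_mul, toAdd_ofAdd, toAdd_ofAdd, mul_one, h, hu1]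
        show -1 + toAdd (1 : MZ p) = -1
        rw [toAdd_one, add_zero]
      rw [Finset.prod_congr rfl hcv, Finset.prod_const, Finset.card_univ, ZMod.card,
        Odd.neg_one_pow hodd] at hPw
      exact one_ne_neg_one p hodd hPw.symm
  have hinl : ∀ w, φ (SemidirectProduct.inl w) = SemidirectProduct.inl w := by
    intro w
    rw [image_inl_eq p φ hodd w, phi_inl_scaled p hodd φ η hE w]
    congr 1
    funext x
    rw [hη1, one_mul, ofAdd_toAdd]
  have hinr1 : φ (SemidirectProduct.inr (ofAdd (1:ZMod p)))
      = SemidirectProduct.inr (ofAdd (1:ZMod p)) := by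
    apply SemidirectProduct.ext
    · rw [SemidirectProduct.left_inr, ← hudef]
      exact hu1
    · rw [SemidirectProduct.right_inr]
      exact hMq
  have hinr : ∀ qq : MZ p, φ (SemidirectProduct.inr qq) = SemidirectProduct.inr qq := by
    intro qq
    have hq : SemidirectProduct.inr qq
        = (SemidirectProduct.inr (ofAdd (1:ZMod p)) : GW p) ^ (toAdd qq).val := by
      rw [← map_pow]
      congr 1
      rw [← ofAdd_toAdd qq]
      rw [← ofAdd_nsmul, nsmul_eq_mul, mul_one, ZMod.natCast_rightInverse _, toAdd_ofAdd]
    rw [hq, map_pow, hinr1]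
  refine DFunLike.ext φ 1 (fun x => ?_)
  show φ x = x
  have hx : x = SemidirectProduct.inl x.left * SemidirectProduct.inr x.right := by
    apply SemidirectProduct.ext
    · funext y
      rw [mul_left_apply, SemidirectProduct.left_inl, SemidirectProduct.left_inr,
        Pi.one_apply, mul_one]
    · rw [SemidirectProduct.mul_right, SemidirectProduct.right_inl, SemidirectProduct.right_inr,
        one_mul]
  rw [hx, map_mul, hinl, hinr]

end ZpAux

/-- For every odd prime `p`, the wreath product `Z_p ≀ Z_p`
(the semidirect product of `Z_p` with `(Z_p)^p`, acting by cyclically permuting the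
coordinates) is not GRR-detecting, and consequently not DRR-detecting. -/
theorem ZpWrZp_not_GRRDetecting (p : ℕ) (hp : p.Prime) (hodd : Odd p) :
    ¬ GRRDetecting (WreathProd (Multiplicative (ZMod p)) (Multiplicative (ZMod p))) ∧
      ¬ DRRDetecting (WreathProd (Multiplicative (ZMod p)) (Multiplicative (ZMod p))) := by
  haveI : Fact p.Prime := ⟨hp⟩
  have hInv := ZpAux.SS_inv_closed p hodd
  have hTriv := ZpAux.autGS_trivial p hodd
  have hNot := ZpAux.not_isDRR p hodd
  constructor
  · intro hGRR
    exact hNot (hGRR (ZpAux.SS p) hInv hTriv).2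
  · intro hDRR
    exact hNot (hDRR (ZpAux.SS p) hTriv)
end

section
/- If G₁ and G₂ are nontrivial finite groups that each admit a DRR, and gcd(|G₁|, |G₂|) = 1, then the direct product G₁ × G₂ is not DRR-detecting. -/
/-! Common definitions: Cayley digraphs, digraph automorphism groups,
DRRs/GRRs, detecting groups, the regular representation, the group `W(G,N)`,
wreath and cartesian products of digraphs, and the wreath product of groups. -/

universe u

lemma cay_iff {G : Type*} [Group G] (S : Set G) (x y : G) :
    cayAdj S x y ↔ y * x⁻¹ ∈ S := by
  constructor
  · rintro ⟨s, hs, rfl⟩; simpa using hs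
  · intro h; exact ⟨y * x⁻¹, h, by group⟩

lemma mem_digraphAut {V : Type*} {Adj : V → V → Prop} {σ : Equiv.Perm V} :
    σ ∈ digraphAut Adj ↔ ∀ x y, Adj (σ x) (σ y) ↔ Adj x y := Iff.rfl

lemma digraphAut_sdiff_one {G : Type*} [Group G] (S : Set G) :
    digraphAut (cayAdj (S \ {1})) = digraphAut (cayAdj S) := by
  have key : ∀ x y : G, cayAdj (S \ {1}) x y ↔ cayAdj S x y ∧ y ≠ x := by
    intro x y
    rw [cay_iff, cay_iff]
    simp only [Set.mem_diff, Set.mem_singleton_iff, mul_inv_eq_one]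
  ext σ
  simp only [mem_digraphAut]
  constructor
  · intro h x y
    have h1 := h x y
    rw [key, key] at h1
    have hne : σ y = σ x ↔ y = x := ⟨fun e => σ.injective e, fun e => by rw [e]⟩
    by_cases hyx : y = x
    · subst hyx
      rw [cay_iff, cay_iff]
      simp
    · have : σ y ≠ σ x := fun e => hyx (σ.injective e)
      tauto
  · intro h x y
    rw [key, key]
    have : σ y = σ x ↔ y = x := ⟨fun e => σ.injective e, fun e => by rw [e]⟩
    rw [h x y]
    tauto

lemma isDRR_congr {G : Type*} [Group G] {V : Type*} {A B : V → V → Prop}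
    (h : digraphAut A = digraphAut B) : IsDRR G A ↔ IsDRR G B := by
  unfold IsDRR
  rw [h]

lemma mem_iff_of_image_eq {α : Type*} (f : Equiv.Perm α) {S : Set α}
    (h : ⇑f '' S = S) : ∀ x, f x ∈ S ↔ x ∈ S := by
  intro x
  constructor
  · intro hx
    rw [← h] at hx
    obtain ⟨w, hw, hwx⟩ := hx
    rwa [← f.injective hwx]
  · intro hx
    rw [← h]
    exact ⟨x, hx, rfl⟩

lemma isDRR_autGSTrivial {G : Type*} [Group G] {S : Set G}
    (h : IsDRR G (cayAdj S)) : AutGSTrivial S := by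
  intro φ hφ
  have himg : ∀ z : G, φ z ∈ S ↔ z ∈ S := by
    intro z
    have := mem_iff_of_image_eq φ.toEquiv (by simpa using hφ) z
    simpa using this
  have hmem : (φ.toEquiv : Equiv.Perm G) ∈ digraphAut (cayAdj S) := by
    intro x y
    rw [cay_iff, cay_iff]
    show φ y * (φ x)⁻¹ ∈ S ↔ _
    rw [← map_inv, ← map_mul]
    exact himg _
  obtain ⟨τ, hτ, huniq⟩ := h.2 1 1
  have e1 : (⟨φ.toEquiv, hmem⟩ : digraphAut (cayAdj S)) = τ := huniq _ (by simp)
  have e2 : (1 : digraphAut (cayAdj S)) = τ := huniq _ rfl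
  have e3 := e1.trans e2.symm
  ext x
  have := congrArg (fun τ : digraphAut (cayAdj S) => (τ : Equiv.Perm G) x) e3
  simpa using this

lemma autGSTrivial_sdiff_one {G : Type*} [Group G] {S : Set G}
    (h : AutGSTrivial S) : AutGSTrivial (S \ {1}) := by
  intro φ hφ
  apply h
  have h1 : ⇑φ '' (S ∩ {1}) = S ∩ {1} := by
    ext x
    constructor
    · rintro ⟨y, ⟨hyS, hy1⟩, rfl⟩
      rw [Set.mem_singleton_iff] at hy1
      subst hy1
      simpa using hyS
    · rintro ⟨hxS, hx1⟩
      rw [Set.mem_singleton_iff] at hx1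
      subst hx1
      exact ⟨1, ⟨hxS, rfl⟩, map_one φ⟩
  have hdecomp : S = (S \ {1}) ∪ (S ∩ {1}) := by
    ext x
    by_cases hx : x ∈ ({1} : Set G) <;> simp [Set.mem_diff, hx]
  rw [hdecomp, Set.image_union, hφ, h1]

/-- If `G₁` and `G₂` are nontrivial finite groups that each admit a DRR
and `gcd(|G₁|,|G₂|) = 1`, then `G₁ × G₂` is not DRR-detecting. -/
theorem directProduct_coprime_not_DRRDetecting {G₁ G₂ : Type*} [Group G₁] [Group G₂]
    [Fintype G₁] [Fintype G₂] [Nontrivial G₁] [Nontrivial G₂]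
    (h₁ : HasDRR G₁) (h₂ : HasDRR G₂)
    (hco : Nat.gcd (Fintype.card G₁) (Fintype.card G₂) = 1) :
    ¬ DRRDetecting (G₁ × G₂) := by
  classical
  intro hdet
  obtain ⟨S₁', hD₁⟩ := h₁
  obtain ⟨S₂, hD₂⟩ := h₂
  set S₁ : Set G₁ := S₁' \ {1} with hS₁def
  have hA₁ : AutGSTrivial S₁ := autGSTrivial_sdiff_one (isDRR_autGSTrivial hD₁)
  have hA₂ : AutGSTrivial S₂ := isDRR_autGSTrivial hD₂
  have h1S₁ : (1 : G₁) ∉ S₁ := fun h => h.2 rfl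
  set S : Set (G₁ × G₂) := {p | p.1 ∈ S₁ ∨ (p.1 = 1 ∧ p.2 ∈ S₂)} with hSdef
  -- coordinate lemmas: any automorphism of the product preserves the factors
  have hfix2 : ∀ ψ : MulAut (G₁ × G₂), ∀ a : G₁, (ψ (a, 1)).2 = 1 := by
    intro ψ a
    have hpow : (ψ (a, 1)).2 ^ Fintype.card G₁ = 1 := by
      have h1 : ((a, (1 : G₂)) : G₁ × G₂) ^ Fintype.card G₁ = 1 := by
        rw [Prod.pow_mk, pow_card_eq_one, one_pow]
        rfl
      calc (ψ (a, 1)).2 ^ Fintype.card G₁ = (ψ (a, 1) ^ Fintype.card G₁).2 := by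
            rw [Prod.pow_snd]
        _ = (ψ ((a, 1) ^ Fintype.card G₁)).2 := by rw [map_pow]
        _ = 1 := by rw [h1, map_one]; rfl
    have hd1 : orderOf (ψ (a, 1)).2 ∣ Fintype.card G₁ := orderOf_dvd_of_pow_eq_one hpow
    have hd2 : orderOf (ψ (a, 1)).2 ∣ Fintype.card G₂ := orderOf_dvd_card
    have : orderOf (ψ (a, 1)).2 ∣ 1 := hco ▸ Nat.dvd_gcd hd1 hd2
    rw [Nat.dvd_one] at this
    exact orderOf_eq_one_iff.mp this
  have hfix1 : ∀ ψ : MulAut (G₁ × G₂), ∀ b : G₂, (ψ ((1 : G₁), b)).1 = 1 := by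
    intro ψ b
    have hpow : (ψ (1, b)).1 ^ Fintype.card G₂ = 1 := by
      have h1 : (((1 : G₁), b) : G₁ × G₂) ^ Fintype.card G₂ = 1 := by
        rw [Prod.pow_mk, pow_card_eq_one, one_pow]
        rfl
      calc (ψ (1, b)).1 ^ Fintype.card G₂ = (ψ (1, b) ^ Fintype.card G₂).1 := by
            rw [Prod.pow_fst]
        _ = (ψ ((1, b) ^ Fintype.card G₂)).1 := by rw [map_pow]
        _ = 1 := by rw [h1, map_one]; rfl
    have hd1 : orderOf (ψ (1, b)).1 ∣ Fintype.card G₂ := orderOf_dvd_of_pow_eq_one hpow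
    have hd2 : orderOf (ψ (1, b)).1 ∣ Fintype.card G₁ := orderOf_dvd_card
    have : orderOf (ψ (1, b)).1 ∣ 1 := hco ▸ Nat.dvd_gcd hd2 hd1
    rw [Nat.dvd_one] at this
    exact orderOf_eq_one_iff.mp this
  -- Part A : Aut(G₁ × G₂, S) is trivial
  have hAutS : AutGSTrivial S := by
    intro φ hφ
    have himg : ∀ z : G₁ × G₂, φ z ∈ S ↔ z ∈ S := by
      intro z
      have := mem_iff_of_image_eq φ.toEquiv (by simpa using hφ) z
      simpa using this
    have hsymm : ∀ z : G₁ × G₂, φ.symm z ∈ S ↔ z ∈ S := by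
      intro z
      conv_rhs => rw [show z = φ (φ.symm z) from (φ.apply_symm_apply z).symm]
      exact (himg _).symm
    have hfe2 : ∀ a : G₁, φ (a, 1) = ((φ (a, 1)).1, 1) := by
      intro a
      exact Prod.ext rfl (hfix2 φ a)
    have hfe2' : ∀ a : G₁, φ.symm (a, 1) = ((φ.symm (a, 1)).1, 1) := by
      intro a
      exact Prod.ext rfl (hfix2 φ.symm a)
    have hfe1 : ∀ b : G₂, φ (1, b) = (1, (φ (1, b)).2) := by
      intro b
      exact Prod.ext (hfix1 φ b) rfl
    have hfe1' : ∀ b : G₂, φ.symm (1, b) = (1, (φ.symm (1, b)).2) := by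
      intro b
      exact Prod.ext (hfix1 φ.symm b) rfl
    -- the induced automorphisms of the factors
    let Ψ₁ : MulAut G₁ :=
      { toFun := fun a => (φ (a, 1)).1
        invFun := fun a => (φ.symm (a, 1)).1
        left_inv := by
          intro a
          have h : φ.symm (((φ (a, 1)).1 : G₁), (1 : G₂)) = (a, 1) := by
            rw [← hfe2 a, φ.symm_apply_apply]
          exact congrArg Prod.fst h
        right_inv := by
          intro a
          have h : φ ((((φ.symm (a, 1)).1 : G₁)), (1 : G₂)) = (a, 1) := by
            rw [← hfe2' a, φ.apply_symm_apply]
          exact congrArg Prod.fst h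
        map_mul' := by
          intro a a'
          show (φ (a * a', 1)).1 = (φ (a, 1)).1 * (φ (a', 1)).1
          have h : ((a * a' : G₁), (1 : G₂)) = (a, 1) * (a', 1) := by
            rw [Prod.mk_mul_mk, one_mul]
          rw [h, map_mul, Prod.fst_mul] }
    let Ψ₂ : MulAut G₂ :=
      { toFun := fun b => (φ (1, b)).2
        invFun := fun b => (φ.symm (1, b)).2
        left_inv := by
          intro b
          have h : φ.symm ((1 : G₁), ((φ (1, b)).2 : G₂)) = (1, b) := by
            rw [← hfe1 b, φ.symm_apply_apply]
          exact congrArg Prod.snd h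
        right_inv := by
          intro b
          have h : φ ((1 : G₁), ((φ.symm (1, b)).2 : G₂)) = (1, b) := by
            rw [← hfe1' b, φ.apply_symm_apply]
          exact congrArg Prod.snd h
        map_mul' := by
          intro b b'
          show (φ (1, b * b')).2 = (φ (1, b)).2 * (φ (1, b')).2
          have h : ((1 : G₁), b * b') = ((1 : G₁), b) * ((1 : G₁), b') := by
            rw [Prod.mk_mul_mk, one_mul]
          rw [h, map_mul, Prod.snd_mul] }
    have hsplit : ∀ p : G₁ × G₂, φ p = (Ψ₁ p.1, Ψ₂ p.2) := by
      rintro ⟨a, b⟩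
      show φ (a, b) = ((φ (a, 1)).1, (φ (1, b)).2)
      have h : ((a, b) : G₁ × G₂) = (a, 1) * (1, b) := by
        rw [Prod.mk_mul_mk, mul_one, one_mul]
      rw [h, map_mul, hfe2 a, hfe1 b, Prod.mk_mul_mk, mul_one, one_mul]
    -- Ψ₁ fixes S₁
    have hC₁ : ⇑Ψ₁ '' S₁ = S₁ := by
      ext x
      constructor
      · rintro ⟨c, hc, rfl⟩
        have hmem : ((c, (1 : G₂)) : G₁ × G₂) ∈ S := Or.inl hc
        have hm := (himg (c, 1)).mpr hmem
        rcases hm with h | ⟨h1, -⟩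
        · exact h
        · exfalso
          have heq : Ψ₁ c = Ψ₁ 1 := by rw [map_one]; exact h1
          have hc1 : c = 1 := Ψ₁.injective heq
          exact h1S₁ (hc1 ▸ hc)
      · intro hx
        have hmem : ((x, (1 : G₂)) : G₁ × G₂) ∈ S := Or.inl hx
        have hs := (hsymm (x, 1)).mpr hmem
        rcases hs with h | ⟨h1, -⟩
        · refine ⟨(φ.symm (x, 1)).1, h, ?_⟩
          show (φ ((φ.symm (x, 1)).1, 1)).1 = x
          rw [← hfe2' x, φ.apply_symm_apply]
        · exfalso
          have hsy : φ.symm (x, 1) = 1 := by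
            rw [hfe2' x, h1]
            rfl
          have hx1 : ((x, (1 : G₂)) : G₁ × G₂) = 1 := by
            have h2 := congrArg φ hsy
            rwa [φ.apply_symm_apply, map_one] at h2
          have : x = 1 := congrArg Prod.fst hx1
          exact h1S₁ (this ▸ hx)
    have hC₂ : ⇑Ψ₂ '' S₂ = S₂ := by
      ext y
      constructor
      · rintro ⟨b, hb, rfl⟩
        have hmem : (((1 : G₁), b) : G₁ × G₂) ∈ S := Or.inr ⟨rfl, hb⟩
        have hm := (himg (1, b)).mpr hmem
        rcases hm with h | ⟨-, h2⟩
        · exact absurd (by rwa [hfix1 φ b] at h) h1S₁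
        · exact h2
      · intro hy
        have hmem : (((1 : G₁), y) : G₁ × G₂) ∈ S := Or.inr ⟨rfl, hy⟩
        have hs := (hsymm (1, y)).mpr hmem
        rcases hs with h | ⟨-, h2⟩
        · exact absurd (by rwa [hfix1 φ.symm y] at h) h1S₁
        · refine ⟨(φ.symm (1, y)).2, h2, ?_⟩
          show (φ (1, (φ.symm (1, y)).2)).2 = y
          rw [← hfe1' y, φ.apply_symm_apply]
    have hΨ₁ : Ψ₁ = 1 := hA₁ Ψ₁ hC₁
    have hΨ₂ : Ψ₂ = 1 := hA₂ Ψ₂ hC₂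
    refine MulEquiv.ext fun p => ?_
    show φ p = p
    have h1 : Ψ₁ p.1 = p.1 := by rw [hΨ₁]; rfl
    have h2 : Ψ₂ p.2 = p.2 := by rw [hΨ₂]; rfl
    rw [hsplit p, h1, h2]
  -- Part B : Cay(G₁ × G₂, S) is not a DRR
  obtain ⟨a, ha⟩ := exists_ne (1 : G₁)
  obtain ⟨g, hg⟩ := exists_ne (1 : G₂)
  let t : G₁ → G₂ := fun x => if x = a then g else 1
  have ht1 : t 1 = 1 := if_neg fun h => ha h.symm
  have hta : t a = g := if_pos rfl
  let σ : Equiv.Perm (G₁ × G₂) :=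
    { toFun := fun p => (p.1, p.2 * t p.1)
      invFun := fun p => (p.1, p.2 * (t p.1)⁻¹)
      left_inv := by
        intro p
        show (p.1, p.2 * t p.1 * (t p.1)⁻¹) = p
        rw [mul_inv_cancel_right]
      right_inv := by
        intro p
        show (p.1, p.2 * (t p.1)⁻¹ * t p.1) = p
        rw [inv_mul_cancel_right] }
  have hσmem : σ ∈ digraphAut (cayAdj S) := by
    intro p q
    rw [cay_iff, cay_iff]
    show (q.1 * p.1⁻¹ ∈ S₁ ∨ (q.1 * p.1⁻¹ = 1 ∧
        (q.2 * t q.1) * (p.2 * t p.1)⁻¹ ∈ S₂)) ↔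
      (q.1 * p.1⁻¹ ∈ S₁ ∨ (q.1 * p.1⁻¹ = 1 ∧ q.2 * p.2⁻¹ ∈ S₂))
    refine or_congr Iff.rfl (and_congr_right fun h1 => ?_)
    have hq : q.1 = p.1 := by rwa [mul_inv_eq_one] at h1
    rw [hq]
    have h2 : q.2 * t p.1 * (p.2 * t p.1)⁻¹ = q.2 * p.2⁻¹ := by group
    rw [h2]
  have hσ11 : σ ((1 : G₁), (1 : G₂)) = (1, 1) := by
    show ((1 : G₁), (1 : G₂) * t 1) = (1, 1)
    rw [ht1, mul_one]
  have hσa1 : σ (a, (1 : G₂)) = (a, g) := by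
    show (a, (1 : G₂) * t a) = (a, g)
    rw [hta, one_mul]
  have hIsDRR := hdet S hAutS
  obtain ⟨τ, -, huniq⟩ := hIsDRR.2 (1, 1) (1, 1)
  have e1 : (⟨σ, hσmem⟩ : digraphAut (cayAdj S)) = τ := huniq _ hσ11
  have e2 : (1 : digraphAut (cayAdj S)) = τ := huniq _ rfl
  have e3 : σ = (1 : Equiv.Perm (G₁ × G₂)) := congrArg Subtype.val (e1.trans e2.symm)
  have hfin : σ (a, (1 : G₂)) = (a, 1) := by rw [e3]; rfl
  rw [hσa1] at hfin
  exact hg (congrArg Prod.snd hfin)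
end

section
/- If G₁ and G₂ are nontrivial finite groups that each admit a GRR, and gcd(|G₁|, |G₂|) = 1, then the direct product G₁ × G₂ is not GRR-detecting. -/
/-! Common definitions: Cayley digraphs, digraph automorphism groups,
DRRs/GRRs, detecting groups, the regular representation, the group `W(G,N)`,
wreath and cartesian products of digraphs, and the wreath product of groups. -/

universe u

/-- A GRR (in fact any DRR) has trivial `Aut(G,S)`. -/
lemma grr_autGSTrivial {G : Type*} [Group G] {S : Set G} (h : IsGRR G (cayAdj S)) :
    AutGSTrivial S := by
  intro φ hφ
  obtain ⟨-, -, hreg⟩ := h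
  have hmem : (φ : G ≃* G).toEquiv ∈ digraphAut (cayAdj S) := by
    intro x y
    constructor
    · rintro ⟨s, hs, hxy⟩
      obtain ⟨t, ht, rfl⟩ : s ∈ ⇑φ '' S := by rw [hφ]; exact hs
      exact ⟨t, ht, φ.injective (by simpa [map_mul] using hxy)⟩
    · rintro ⟨s, hs, rfl⟩
      exact ⟨φ s, hφ ▸ ⟨s, hs, rfl⟩, by simp [map_mul]⟩
  obtain ⟨σ, hσ, huniq⟩ := hreg 1 1
  have h1 : (⟨(φ : G ≃* G).toEquiv, hmem⟩ : digraphAut (cayAdj S)) = σ :=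
    huniq _ (by simp)
  have h2 : (1 : digraphAut (cayAdj S)) = σ := huniq _ (by simp)
  have h3 : (φ : G ≃* G).toEquiv = (1 : Equiv.Perm G) := by
    have := Subtype.ext_iff.mp (h1.trans h2.symm)
    simpa using this
  ext g
  exact Equiv.ext_iff.mp h3 g

/-- The "fiber over 1" permutation of `G₁ × G₂` multiplying the second
coordinate by `h0` only when the first coordinate is `1`. -/
def fiberPerm {G₁ G₂ : Type*} [Group G₁] [Group G₂] [DecidableEq G₁] (h0 : G₂) :
    Equiv.Perm (G₁ × G₂) where
  toFun p := (p.1, p.2 * (if p.1 = 1 then h0 else 1))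
  invFun p := (p.1, p.2 * (if p.1 = 1 then h0 else 1)⁻¹)
  left_inv p := Prod.ext rfl (by by_cases h : p.1 = 1 <;> simp [h, mul_assoc])
  right_inv p := Prod.ext rfl (by by_cases h : p.1 = 1 <;> simp [h, mul_assoc])

/-- If `G₁` and `G₂` are nontrivial finite groups that each admit a GRR
and `gcd(|G₁|,|G₂|) = 1`, then `G₁ × G₂` is not GRR-detecting. -/
theorem directProduct_coprime_not_GRRDetecting {G₁ G₂ : Type*} [Group G₁] [Group G₂]
    [Fintype G₁] [Fintype G₂] [Nontrivial G₁] [Nontrivial G₂]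
    (h₁ : HasGRR G₁) (h₂ : HasGRR G₂)
    (hco : Nat.gcd (Fintype.card G₁) (Fintype.card G₂) = 1) :
    ¬ GRRDetecting (G₁ × G₂) := by
  classical
  obtain ⟨S₁, hinv₁, hgrr₁⟩ := h₁
  obtain ⟨S₂, hinv₂, hgrr₂⟩ := h₂
  have hA₁ : AutGSTrivial S₁ := grr_autGSTrivial hgrr₁
  have hA₂ : AutGSTrivial S₂ := grr_autGSTrivial hgrr₂
  intro hdet
  -- the connection set of the wreath product of the two GRRs (with loops removed)
  set S : Set (G₁ × G₂) :=
    {p | (p.1 ∈ S₁ ∧ p.1 ≠ 1) ∨ (p.1 = 1 ∧ p.2 ∈ S₂ ∧ p.2 ≠ 1)} with hSdef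
  -- S is inverse-closed
  have hSinv : ∀ s ∈ S, s⁻¹ ∈ S := by
    rintro ⟨a, b⟩ (⟨ha, hne⟩ | ⟨ha, hb, hne⟩)
    · exact Or.inl ⟨hinv₁ a ha, fun h => hne (by simpa using inv_eq_one.mp h)⟩
    · exact Or.inr ⟨by simpa using inv_eq_one.mpr ha,
        hinv₂ b hb, fun h => hne (by simpa using inv_eq_one.mp h)⟩
  -- decomposing automorphisms of G₁ × G₂
  have hsnd : ∀ (φ : MulAut (G₁ × G₂)) (g : G₁), (φ (g, 1)).2 = 1 := by
    intro φ g
    rw [← orderOf_eq_one_iff]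
    have hd2 : orderOf (φ (g, 1)).2 ∣ Fintype.card G₂ := orderOf_dvd_card
    have hd1 : orderOf (φ (g, 1)).2 ∣ Fintype.card G₁ := by
      have h1 : orderOf (φ (g, 1)) = orderOf ((g, 1) : G₁ × G₂) :=
        orderOf_injective φ.toMonoidHom φ.injective _
    -- orderOf (g,1) = orderOf g
      have h2 : orderOf ((g, 1) : G₁ × G₂) = orderOf g := by
        rw [Prod.orderOf]; simp
      have h3 : orderOf (φ (g, 1)).2 ∣ orderOf (φ (g, 1)) := by
        rw [Prod.orderOf]; exact Nat.dvd_lcm_right _ _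
      calc orderOf (φ (g, 1)).2 ∣ orderOf g := by rw [← h2, ← h1]; exact h3
        _ ∣ Fintype.card G₁ := orderOf_dvd_card
    have := Nat.dvd_gcd hd1 hd2
    rw [hco] at this
    exact Nat.eq_one_of_dvd_one this
  have hfst : ∀ (φ : MulAut (G₁ × G₂)) (h : G₂), (φ (1, h)).1 = 1 := by
    intro φ h
    rw [← orderOf_eq_one_iff]
    have hd1 : orderOf (φ (1, h)).1 ∣ Fintype.card G₁ := orderOf_dvd_card
    have hd2 : orderOf (φ (1, h)).1 ∣ Fintype.card G₂ := by
      have h1 : orderOf (φ (1, h)) = orderOf ((1, h) : G₁ × G₂) :=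
        orderOf_injective φ.toMonoidHom φ.injective _
      have h2 : orderOf ((1, h) : G₁ × G₂) = orderOf h := by
        rw [Prod.orderOf]; simp
      have h3 : orderOf (φ (1, h)).1 ∣ orderOf (φ (1, h)) := by
        rw [Prod.orderOf]; exact Nat.dvd_lcm_left _ _
      calc orderOf (φ (1, h)).1 ∣ orderOf h := by rw [← h2, ← h1]; exact h3
        _ ∣ Fintype.card G₂ := orderOf_dvd_card
    have := Nat.dvd_gcd hd1 hd2
    rw [hco] at this
    exact Nat.eq_one_of_dvd_one this
  -- Aut(G,S) is trivial
  have hStriv : AutGSTrivial S := by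
    intro φ hφ
    -- the two component homomorphisms
    set ψ₁ : G₁ →* G₁ :=
      { toFun := fun g => (φ (g, 1)).1
        map_one' := by show (φ 1).1 = 1; simp
        map_mul' := fun a b => by
          show (φ (a * b, 1)).1 = (φ (a, 1)).1 * (φ (b, 1)).1
          rw [show ((a * b : G₁), (1 : G₂)) = (a, 1) * (b, 1) by simp, map_mul]
          rfl } with hψ₁def
    set ψ₂ : G₂ →* G₂ :=
      { toFun := fun h => (φ (1, h)).2
        map_one' := by show (φ 1).2 = 1; simp
        map_mul' := fun a b => by
          show (φ (1, a * b)).2 = (φ (1, a)).2 * (φ (1, b)).2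
          rw [show ((1 : G₁), (a * b : G₂)) = (1, a) * (1, b) by simp, map_mul]
          rfl } with hψ₂def
    have hψ₁inj : Function.Injective ψ₁ := by
      apply (injective_iff_map_eq_one ψ₁).mpr
      intro g hg
      have e1 : φ (g, 1) = (1, 1) := Prod.ext hg (hsnd φ g)
      have e2 : ((g, 1) : G₁ × G₂) = 1 := φ.injective (by rw [e1, map_one]; rfl)
      exact congrArg Prod.fst e2
    have hψ₂inj : Function.Injective ψ₂ := by
      apply (injective_iff_map_eq_one ψ₂).mpr
      intro h hh
      have e1 : φ (1, h) = (1, 1) := Prod.ext (hfst φ h) hh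
      have e2 : ((1, h) : G₁ × G₂) = 1 := φ.injective (by rw [e1, map_one]; rfl)
      exact congrArg Prod.snd e2
    have hφ1 : ∀ g : G₁, φ (g, 1) = (ψ₁ g, 1) := fun g => Prod.ext rfl (hsnd φ g)
    have hφ2 : ∀ h : G₂, φ (1, h) = (1, ψ₂ h) := fun h => Prod.ext (hfst φ h) rfl
    have hφprod : ∀ (g : G₁) (h : G₂), φ (g, h) = (ψ₁ g, ψ₂ h) := by
      intro g h
      have : ((g : G₁), (h : G₂)) = (g, 1) * (1, h) := by simp
      rw [this, map_mul, hφ1, hφ2]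
      simp
    -- φ₁ as a MulAut
    set φ₁ : MulAut G₁ :=
      MulEquiv.ofBijective ψ₁ ((Finite.injective_iff_bijective).mp hψ₁inj) with hφ₁def
    set φ₂ : MulAut G₂ :=
      MulEquiv.ofBijective ψ₂ ((Finite.injective_iff_bijective).mp hψ₂inj) with hφ₂def
    have hc₁ : ∀ g, φ₁ g = ψ₁ g := fun g => rfl
    have hc₂ : ∀ h, φ₂ h = ψ₂ h := fun h => rfl
    -- ψ₁ maps S₁ \ {1} into itself
    have key₁ : ∀ s ∈ S₁, s ≠ 1 → ψ₁ s ∈ S₁ ∧ ψ₁ s ≠ 1 := by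
      intro s hs hne
      have hmem : ((s : G₁), (1 : G₂)) ∈ S := Or.inl ⟨hs, hne⟩
      have : φ (s, 1) ∈ S := by
        rw [← hφ]; exact ⟨(s, 1), hmem, rfl⟩
      rw [hφ1] at this
      rcases this with ⟨h1, h2⟩ | ⟨h1, -, -⟩
      · exact ⟨h1, h2⟩
      · exact absurd (hψ₁inj (by simpa using h1)) hne
    have key₁' : ∀ s ∈ S₁, s ≠ 1 → ∃ t, (t ∈ S₁ ∧ t ≠ 1) ∧ ψ₁ t = s := by
      intro s hs hne
      have hmem : ((s : G₁), (1 : G₂)) ∈ ⇑φ '' S := hφ.symm ▸ (Or.inl ⟨hs, hne⟩)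
      obtain ⟨⟨a, b⟩, hab, heq⟩ := hmem
      rw [hφprod] at heq
      have hb : b = 1 := hψ₂inj (by simpa using congrArg Prod.snd heq)
      subst hb
      rcases hab with ⟨ha1, ha2⟩ | ⟨-, -, hb2⟩
      · exact ⟨a, ⟨ha1, ha2⟩, congrArg Prod.fst heq⟩
      · exact absurd rfl hb2
    have key₂ : ∀ s ∈ S₂, s ≠ 1 → ψ₂ s ∈ S₂ ∧ ψ₂ s ≠ 1 := by
      intro s hs hne
      have hmem : ((1 : G₁), (s : G₂)) ∈ S := Or.inr ⟨rfl, hs, hne⟩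
      have : φ (1, s) ∈ S := by
        rw [← hφ]; exact ⟨(1, s), hmem, rfl⟩
      rw [hφ2] at this
      rcases this with ⟨h1, h2⟩ | ⟨-, h1, h2⟩
      · exact absurd rfl h2
      · exact ⟨h1, h2⟩
    have key₂' : ∀ s ∈ S₂, s ≠ 1 → ∃ t, (t ∈ S₂ ∧ t ≠ 1) ∧ ψ₂ t = s := by
      intro s hs hne
      have hmem : ((1 : G₁), (s : G₂)) ∈ ⇑φ '' S := hφ.symm ▸ (Or.inr ⟨rfl, hs, hne⟩)
      obtain ⟨⟨a, b⟩, hab, heq⟩ := hmem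
      rw [hφprod] at heq
      have ha : a = 1 := hψ₁inj (by simpa using congrArg Prod.fst heq)
      subst ha
      rcases hab with ⟨ha1, ha2⟩ | ⟨-, hb1, hb2⟩
      · exact absurd rfl ha2
      · exact ⟨b, ⟨hb1, hb2⟩, congrArg Prod.snd heq⟩
    -- hence φ₁ fixes S₁ setwise
    have himg₁ : ⇑φ₁ '' S₁ = S₁ := by
      ext x
      constructor
      · rintro ⟨s, hs, rfl⟩
        rw [hc₁]
        by_cases h : s = 1
        · subst h; simpa using hs
        · exact (key₁ s hs h).1
      · intro hx
        by_cases h : x = 1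
        · exact ⟨x, hx, by rw [hc₁, h, map_one]⟩
        · obtain ⟨t, ⟨ht1, _⟩, ht3⟩ := key₁' x hx h
          exact ⟨t, ht1, by rw [hc₁, ht3]⟩
    have himg₂ : ⇑φ₂ '' S₂ = S₂ := by
      ext x
      constructor
      · rintro ⟨s, hs, rfl⟩
        rw [hc₂]
        by_cases h : s = 1
        · subst h; simpa using hs
        · exact (key₂ s hs h).1
      · intro hx
        by_cases h : x = 1
        · exact ⟨x, hx, by rw [hc₂, h, map_one]⟩
        · obtain ⟨t, ⟨ht1, _⟩, ht3⟩ := key₂' x hx h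
          exact ⟨t, ht1, by rw [hc₂, ht3]⟩
    have hid₁ : φ₁ = 1 := hA₁ φ₁ himg₁
    have hid₂ : φ₂ = 1 := hA₂ φ₂ himg₂
    have hψ₁id : ∀ g, ψ₁ g = g := by
      intro g; rw [← hc₁, hid₁]; rfl
    have hψ₂id : ∀ h, ψ₂ h = h := by
      intro h; rw [← hc₂, hid₂]; rfl
    apply MulEquiv.ext
    intro p
    show φ p = p
    calc φ p = φ (p.1, p.2) := rfl
      _ = (ψ₁ p.1, ψ₂ p.2) := hφprod p.1 p.2
      _ = (p.1, p.2) := by rw [hψ₁id, hψ₂id]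
  -- apply GRR-detection
  obtain ⟨-, -, hreg⟩ := hdet S hSinv hStriv
  -- the extra automorphism
  obtain ⟨h0, hh0⟩ := exists_ne (1 : G₂)
  obtain ⟨g0, hg0⟩ := exists_ne (1 : G₁)
  -- a convenient description of the adjacency
  have hScay : ∀ x y : G₁ × G₂, cayAdj S x y ↔
      ((∃ s₁, (s₁ ∈ S₁ ∧ s₁ ≠ 1) ∧ y.1 = s₁ * x.1) ∨
        (y.1 = x.1 ∧ ∃ s₂, (s₂ ∈ S₂ ∧ s₂ ≠ 1) ∧ y.2 = s₂ * x.2)) := by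
    intro x y
    constructor
    · rintro ⟨⟨a, b⟩, hs | hs, rfl⟩
      · exact Or.inl ⟨a, hs, rfl⟩
      · refine Or.inr ⟨?_, b, hs.2, rfl⟩
        show a * x.1 = x.1
        rw [show a = 1 from hs.1, one_mul]
    · rintro (⟨s₁, hs, hy⟩ | ⟨hy, s₂, hs, hy2⟩)
      · refine ⟨(s₁, y.2 * x.2⁻¹), Or.inl hs, Prod.ext hy ?_⟩
        show y.2 = y.2 * x.2⁻¹ * x.2
        group
      · exact ⟨(1, s₂), Or.inr ⟨rfl, hs⟩, Prod.ext (by simpa using hy) hy2⟩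
  have hmem : fiberPerm (G₁ := G₁) h0 ∈ digraphAut (cayAdj S) := by
    intro x y
    rw [hScay, hScay]
    show ((∃ s₁, (s₁ ∈ S₁ ∧ s₁ ≠ 1) ∧ y.1 = s₁ * x.1) ∨
        (y.1 = x.1 ∧ ∃ s₂, (s₂ ∈ S₂ ∧ s₂ ≠ 1) ∧
          y.2 * (if y.1 = 1 then h0 else 1) = s₂ * (x.2 * (if x.1 = 1 then h0 else 1)))) ↔ _
    apply or_congr Iff.rfl
    apply and_congr_right
    intro hfst
    rw [hfst]
    apply exists_congr
    intro s₂
    apply and_congr_right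
    intro _
    rw [← mul_assoc]
    exact mul_left_inj _
  obtain ⟨σ, hσ, huniq⟩ := hreg (g0, 1) (g0, 1)
  have he : (⟨fiberPerm (G₁ := G₁) h0, hmem⟩ : digraphAut (cayAdj S)) = σ := by
    apply huniq
    show ((g0 : G₁), (1 : G₂) * (if g0 = 1 then h0 else 1)) = (g0, 1)
    rw [if_neg hg0, mul_one]
  have hid : (1 : digraphAut (cayAdj S)) = σ := huniq 1 (by simp)
  have hperm : fiberPerm (G₁ := G₁) h0 = (1 : Equiv.Perm (G₁ × G₂)) := by
    have := Subtype.ext_iff.mp (he.trans hid.symm)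
    simpa using this
  have : ((1 : G₁), (1 : G₂) * (if (1 : G₁) = 1 then h0 else 1)) = ((1 : G₁), (1 : G₂)) :=
    Equiv.ext_iff.mp hperm ((1 : G₁), (1 : G₂))
  rw [if_pos rfl, one_mul] at this
  exact hh0 (congrArg Prod.snd this)
end

section
/- Let N be a normal subgroup of a finite group G. Then W(G,N) is a subgroup of the symmetric group on G, it contains the right regular representation of G, and it has order |G/N| · |N|^{|G/N|} (it is isomorphic to the wreath product (G/N) ≀ N, i.e., the semidirect product (G/N) ⋉ N^{G/N} with G/N acting by translating coordinates). -/
/-! Common definitions: Cayley digraphs, digraph automorphism groups,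
DRRs/GRRs, detecting groups, the regular representation, the group `W(G,N)`,
wreath and cartesian products of digraphs, and the wreath product of groups. -/

universe u

section WAux

variable {G : Type*} [Group G] (N : Subgroup G) [N.Normal]

/-- Identification of `G` with `(G ⧸ N) × N` via coset representatives. -/
noncomputable def eGN : G ≃ (G ⧸ N) × ↥N where
  toFun x := (QuotientGroup.mk x, ⟨x * ((QuotientGroup.mk x : G ⧸ N).out)⁻¹, by
    rw [← QuotientGroup.eq_one_iff]
    simp [QuotientGroup.out_eq']⟩)
  invFun p := (p.2 : G) * p.1.out
  left_inv x := by simp [mul_assoc]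
  right_inv p := by
    have h1 : (QuotientGroup.mk ((p.2 : G) * p.1.out) : G ⧸ N) = p.1 := by
      have h2 : (QuotientGroup.mk (p.2 : G) : G ⧸ N) = 1 :=
        (QuotientGroup.eq_one_iff _).mpr p.2.2
      rw [QuotientGroup.mk_mul, h2, one_mul, QuotientGroup.out_eq']
    refine Prod.ext h1 (Subtype.ext ?_)
    simp only [h1]
    group

/-- The underlying permutation of `(G⧸N) × N` attached to an element of the
wreath product. -/
def psiPerm (w : WreathProd (G ⧸ N) ↥N) : Equiv.Perm ((G ⧸ N) × ↥N) where
  toFun p := (p.1 * w.right⁻¹, p.2 * (w.left (p.1 * w.right⁻¹))⁻¹)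
  invFun p := (p.1 * w.right, p.2 * w.left p.1)
  left_inv p := by simp [mul_assoc]
  right_inv p := by simp [mul_assoc]

/-- `psiPerm` as a monoid homomorphism. -/
def psiHom : WreathProd (G ⧸ N) ↥N →* Equiv.Perm ((G ⧸ N) × ↥N) where
  toFun := psiPerm N
  map_one' := by
    ext p <;> simp [psiPerm]
  map_mul' w₁ w₂ := by
    ext p <;>
      simp [psiPerm, transHom, transAut, mul_assoc, mul_inv_rev]

lemma psiHom_injective : Function.Injective (psiHom N) := by
  rw [injective_iff_map_eq_one]
  intro w hw
  have hr : w.right = 1 := by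
    have := congrArg (fun σ : Equiv.Perm ((G ⧸ N) × ↥N) => (σ (1, 1)).1) hw
    simpa [psiHom, psiPerm] using this
  have hl : w.left = 1 := by
    funext a
    have := congrArg (fun σ : Equiv.Perm ((G ⧸ N) × ↥N) => (σ (a, 1)).2) hw
    simpa [psiHom, psiPerm, hr] using this
  exact SemidirectProduct.ext hl hr

/-- Conjugation of permutation groups by an equivalence, as a monoid hom. -/
def permCongrHom {α β : Type*} (e : α ≃ β) : Equiv.Perm α →* Equiv.Perm β where
  toFun σ := e.permCongr σ
  map_one' := by ext x; simp
  map_mul' σ τ := by ext x; simp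

lemma permCongrHom_injective {α β : Type*} (e : α ≃ β) :
    Function.Injective (permCongrHom e) :=
  fun _ _ h => e.permCongr.injective h

/-- The homomorphism from the wreath product onto `W(G,N)`. -/
noncomputable def thetaHom : WreathProd (G ⧸ N) ↥N →* Equiv.Perm G :=
  (permCongrHom (eGN N).symm).comp (psiHom N)

lemma thetaHom_injective : Function.Injective (thetaHom N) :=
  (permCongrHom_injective _).comp (psiHom_injective N)

lemma thetaHom_apply (w : WreathProd (G ⧸ N) ↥N) (x : G) :
    thetaHom N w x =
      x * ((QuotientGroup.mk x : G ⧸ N).out)⁻¹ *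
        (↑(w.left (QuotientGroup.mk x * w.right⁻¹)))⁻¹ *
        ((QuotientGroup.mk x * w.right⁻¹ : G ⧸ N)).out := by
  simp [thetaHom, permCongrHom, psiHom, psiPerm, eGN, mul_assoc]

lemma thetaHom_range_carrier :
    (thetaHom N).range.carrier = Wset G N := by
  ext σ
  constructor
  · rintro ⟨w, rfl⟩
    refine ⟨((w.right⁻¹ : G ⧸ N).out),
      fun a => ((w.right⁻¹ : G ⧸ N).out)⁻¹ * (a.out)⁻¹ *
        (↑(w.left (a * w.right⁻¹)))⁻¹ * ((a * w.right⁻¹ : G ⧸ N)).out,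
      fun a => ?_, fun x => ?_⟩
    · rw [← QuotientGroup.eq_one_iff]
      have hm : (QuotientGroup.mk (↑(w.left (a * w.right⁻¹)) : G) : G ⧸ N) = 1 :=
        (QuotientGroup.eq_one_iff _).mpr (w.left (a * w.right⁻¹)).2
      simp only [QuotientGroup.mk_mul, QuotientGroup.mk_inv, QuotientGroup.out_eq', hm]
      group
    · rw [thetaHom_apply]
      group
  · rintro ⟨c, f, hf, hσ⟩
    refine ⟨⟨fun a => ⟨a.out * (f (a * (QuotientGroup.mk c)⁻¹))⁻¹ * c⁻¹ *
        ((a * (QuotientGroup.mk c)⁻¹ : G ⧸ N).out)⁻¹, ?_⟩,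
        (QuotientGroup.mk c)⁻¹⟩, ?_⟩
    · rw [← QuotientGroup.eq_one_iff]
      have hm : (QuotientGroup.mk (f (a * (QuotientGroup.mk c)⁻¹)) : G ⧸ N) = 1 :=
        (QuotientGroup.eq_one_iff _).mpr (hf _)
      simp only [QuotientGroup.mk_mul, QuotientGroup.mk_inv, QuotientGroup.out_eq', hm]
      group
    · ext x
      rw [thetaHom_apply, hσ]
      simp only [inv_inv, mul_inv_cancel_right, mul_inv_rev]
      group

end WAux

/-- `W(G,N)` is a subgroup of the symmetric group on `G`, it contains
the right regular representation of `G`, has order `|G/N| · |N|^{|G/N|}`, and is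
isomorphic to the wreath product `(G/N) ≀ N`. -/
theorem Wset_is_subgroup {G : Type*} [Group G] [Fintype G] (N : Subgroup G) [N.Normal] :
    ∃ W : Subgroup (Equiv.Perm G), (↑W : Set (Equiv.Perm G)) = Wset G N ∧
      regularRep G ≤ W ∧
      Nat.card ↥W = Nat.card (G ⧸ N) * Nat.card ↥N ^ Nat.card (G ⧸ N) ∧
      Nonempty (↥W ≃* WreathProd (G ⧸ N) ↥N) := by
  classical
  refine ⟨(thetaHom N).range, thetaHom_range_carrier N, ?_, ?_, ?_⟩
  · rintro σ ⟨g, hg⟩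
    have hmem : σ ∈ Wset G N :=
      ⟨g, fun _ => 1, fun _ => N.one_mem, fun x => by simp [hg x]⟩
    show σ ∈ ((thetaHom N).range : Set (Equiv.Perm G))
    rw [show ((thetaHom N).range : Set (Equiv.Perm G)) = Wset G N from
      thetaHom_range_carrier N]
    exact hmem
  · have h1 : Nat.card ↥(thetaHom N).range = Nat.card (WreathProd (G ⧸ N) ↥N) :=
      Nat.card_congr (MonoidHom.ofInjective (thetaHom_injective N)).toEquiv.symm
    have e2 : WreathProd (G ⧸ N) ↥N ≃ ((G ⧸ N) → ↥N) × (G ⧸ N) :=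
      ⟨fun w => (w.left, w.right), fun p => ⟨p.1, p.2⟩, fun _ => rfl, fun _ => rfl⟩
    rw [h1, Nat.card_congr e2, Nat.card_prod, Nat.card_fun, mul_comm]
  · exact ⟨(MonoidHom.ofInjective (thetaHom_injective N)).symm⟩
end

section
/- Let N be a normal subgroup of a finite group G with quotient map x ↦ x̄, let S̄₁ ⊆ G/N with 1̄ ∉ S̄₁ (so Cay(G/N, S̄₁) is loopless), let S₂ ⊆ N, and let S₁ = {g ∈ G : ḡ ∈ S̄₁}. Then Cay(G, S₁ ∪ S₂) is isomorphic to the digraph wreath product Cay(G/N, S̄₁) ≀ Cay(N, S₂), and W(G,N) is contained in Aut(Cay(G, S₁ ∪ S₂)). -/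
/-! Common definitions: Cayley digraphs, digraph automorphism groups,
DRRs/GRRs, detecting groups, the regular representation, the group `W(G,N)`,
wreath and cartesian products of digraphs, and the wreath product of groups. -/

universe u

noncomputable def secEquiv (G : Type*) [Group G] (N : Subgroup G) [N.Normal] :
    G ≃ (G ⧸ N) × ↥N where
  toFun x := (QuotientGroup.mk x,
    ⟨x * (QuotientGroup.mk x : G ⧸ N).out⁻¹, by
      rw [← QuotientGroup.eq_one_iff]
      rw [QuotientGroup.mk_mul, QuotientGroup.mk_inv, QuotientGroup.out_eq']
      simp⟩)
  invFun p := (p.2 : G) * p.1.out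
  left_inv x := by simp
  right_inv p := by
    have h1 : QuotientGroup.mk ((p.2 : G) * p.1.out) = p.1 := by
      rw [QuotientGroup.mk_mul, (QuotientGroup.eq_one_iff _).mpr p.2.2, one_mul,
        QuotientGroup.out_eq']
    ext
    · exact h1
    · simp [h1]

/-- With `S₁ = {g ∈ G : ḡ ∈ S̄₁}`, the Cayley digraph
`Cay(G, S₁ ∪ S₂)` is isomorphic to the wreath product
`Cay(G/N, S̄₁) ≀ Cay(N, S₂)`, and `W(G,N) ⊆ Aut(Cay(G, S₁ ∪ S₂))`. -/
theorem cayley_iso_wreath_and_Wset_le_aut {G : Type*} [Group G] [Fintype G]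
    (N : Subgroup G) [N.Normal]
    (T : Set (G ⧸ N)) (hT : (1 : G ⧸ N) ∉ T) (S₂ : Set ↥N) :
    (∃ e : G ≃ (G ⧸ N) × ↥N,
        ∀ x y : G,
          cayAdj ({g : G | QuotientGroup.mk g ∈ T} ∪ (Subtype.val '' S₂)) x y ↔
            wreathAdj (cayAdj T) (cayAdj S₂) (e x) (e y)) ∧
    ∀ σ ∈ Wset G N,
      σ ∈ digraphAut
        (cayAdj ({g : G | QuotientGroup.mk g ∈ T} ∪ (Subtype.val '' S₂))) := by
  constructor
  · refine ⟨secEquiv G N, fun x y => ?_⟩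
    constructor
    · rintro ⟨s, hs | ⟨n, hn, rfl⟩, rfl⟩
      · exact Or.inl ⟨QuotientGroup.mk s, hs, by simp [secEquiv]⟩
      · refine Or.inr ⟨?_, n, hn, ?_⟩
        · simp [secEquiv, (QuotientGroup.eq_one_iff (n : G)).mpr n.2]
        · have hq : QuotientGroup.mk ((n : G) * x) = (QuotientGroup.mk x : G ⧸ N) := by
            rw [QuotientGroup.mk_mul, (QuotientGroup.eq_one_iff _).mpr n.2, one_mul]
          ext
          simp only [secEquiv, Equiv.coe_fn_mk, hq, Subgroup.coe_mul]
          group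
    · rintro (⟨t, ht, h⟩ | ⟨h1, n, hn, h2⟩)
      · refine ⟨y * x⁻¹, Or.inl ?_, by group⟩
        show QuotientGroup.mk (y * x⁻¹) ∈ T
        simp only [secEquiv, Equiv.coe_fn_mk] at h
        have : (QuotientGroup.mk (y * x⁻¹) : G ⧸ N) = t := by
          rw [QuotientGroup.mk_mul, QuotientGroup.mk_inv, h, mul_inv_cancel_right]
        rwa [this]
      · refine ⟨(n : G), Or.inr ⟨n, hn, rfl⟩, ?_⟩
        simp only [secEquiv, Equiv.coe_fn_mk, Prod.mk.injEq] at h1 h2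
        have h2' := congrArg (Subtype.val) h2
        simp only [Subgroup.coe_mul] at h2'
        have key : y * ((QuotientGroup.mk y : G ⧸ N).out)⁻¹ =
            (n : G) * (x * ((QuotientGroup.mk x : G ⧸ N).out)⁻¹) := h2'
        rw [← h1] at key
        have := congrArg (· * (QuotientGroup.mk x : G ⧸ N).out) key
        simpa [mul_assoc] using this
  · rintro σ ⟨c, f, hf, hσ⟩ x y
    have hmk : ∀ z : G, (QuotientGroup.mk (σ z) : G ⧸ N)
        = QuotientGroup.mk z * QuotientGroup.mk c := by
      intro z
      rw [hσ z, QuotientGroup.mk_mul, (QuotientGroup.eq_one_iff _).mpr (hf _), mul_one,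
        QuotientGroup.mk_mul]
    constructor
    · rintro ⟨s, hs | ⟨n, hn, hns⟩, h⟩
      · have hq : (QuotientGroup.mk y : G ⧸ N) = QuotientGroup.mk s * QuotientGroup.mk x := by
          have h' := congrArg (QuotientGroup.mk (s := N)) h
          simp only [hmk, QuotientGroup.mk_mul] at h'
          rw [← mul_assoc] at h'
          exact mul_right_cancel h'
        refine ⟨y * x⁻¹, Or.inl ?_, by group⟩
        show QuotientGroup.mk (y * x⁻¹) ∈ T
        have : (QuotientGroup.mk (y * x⁻¹) : G ⧸ N) = QuotientGroup.mk s := by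
          rw [QuotientGroup.mk_mul, QuotientGroup.mk_inv, hq, mul_inv_cancel_right]
        rwa [this]
      · have hq : (QuotientGroup.mk y : G ⧸ N) = QuotientGroup.mk x := by
          have h' := congrArg (QuotientGroup.mk (s := N)) h
          simp only [hmk, QuotientGroup.mk_mul, ← hns,
            (QuotientGroup.eq_one_iff (n : G)).mpr n.2, one_mul] at h'
          exact mul_right_cancel h'
        refine ⟨s, Or.inr ⟨n, hn, hns⟩, ?_⟩
        rw [hσ y, hσ x, hq, ← hns] at h
        have : y = ((n : G) * (x * c * f (QuotientGroup.mk x))) *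
            (f (QuotientGroup.mk x))⁻¹ * c⁻¹ := by rw [← h]; group
        rw [this, ← hns]; group
    · rintro ⟨s, hs | ⟨n, hn, hns⟩, h⟩
      · refine ⟨σ y * (σ x)⁻¹, Or.inl ?_, by group⟩
        show QuotientGroup.mk (σ y * (σ x)⁻¹) ∈ T
        have : (QuotientGroup.mk (σ y * (σ x)⁻¹) : G ⧸ N) = QuotientGroup.mk s := by
          rw [QuotientGroup.mk_mul, QuotientGroup.mk_inv, hmk y, hmk x, h]
          simp [QuotientGroup.mk_mul, mul_assoc]
        rwa [this]
      · have hq : (QuotientGroup.mk y : G ⧸ N) = QuotientGroup.mk x := by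
          rw [h, ← hns, QuotientGroup.mk_mul,
            (QuotientGroup.eq_one_iff (n : G)).mpr n.2, one_mul]
        refine ⟨s, Or.inr ⟨n, hn, hns⟩, ?_⟩
        rw [hσ y, hσ x, hq, h]
        group
end
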